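/- arXiv:1409.5865 — 4 statements merged into one kernel-verified Lean document; each statement's English description precedes it below -/
import Mathlib

section
/- Let x ∈ X_n in a precubical set X, and let (k_1,…,k_n) and (ℓ_1,…,ℓ_n) be sequences of indices with k_j ≤ j and ℓ_j ≤ j for all j = 1,…,n. Define x_j = δ_{k_j}^0⋯δ_{k_n}^0 x and y_j = δ_{ℓ_j}^0⋯δ_{ℓ_n}^0 x. Then the cube paths (x_1,…,x_n,x) and (y_1,…,y_n,x) are homotopic. -/
set_option autoImplicit false

/-- A precubical set: a graded set with face maps `δ_k^ν` (ν encoded as `Bool`,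
`false` = lower face `δ^0`, `true` = upper face `δ^1`; indices are 0-based)
satisfying the precubical identity. -/
structure PCSet : Type 1 where
  cube : ℕ → Type
  face : ∀ {n : ℕ}, Bool → Fin (n + 1) → cube (n + 1) → cube n
  precub : ∀ {n : ℕ} (ν μ : Bool) (k l : ℕ) (hk : k < n + 1) (hl : l < n + 2)
      (_ : k < l) (x : cube (n + 2)),
      face ν ⟨k, hk⟩ (face μ ⟨l, hl⟩ x) =
        face μ ⟨l - 1, by omega⟩ (face ν ⟨k, by omega⟩ x)

namespace PCSet

/-- A cube of arbitrary dimension. -/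
abbrev Cell (X : PCSet) : Type := Σ n : ℕ, X.cube n

/-- One step of a cube path: either `x = δ_k^0 y` or `y = δ_k^1 x`. -/
def Step (X : PCSet) (x y : X.Cell) : Prop :=
  (∃ (n : ℕ) (k : Fin (n + 1)) (c : X.cube (n + 1)),
      x = ⟨n, X.face false k c⟩ ∧ y = ⟨n + 1, c⟩) ∨
  (∃ (n : ℕ) (k : Fin (n + 1)) (c : X.cube (n + 1)),
      x = ⟨n + 1, c⟩ ∧ y = ⟨n, X.face true k c⟩)

/-- A cube path: a nonempty sequence of cubes, consecutive ones related by `Step`. -/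
def IsCubePath (X : PCSet) (l : List X.Cell) : Prop :=
  l ≠ [] ∧ l.Chain' X.Step

/-- Adjacency condition (1): `x_{p−1} = δ_k^0 x_p`, `x_p = δ_ℓ^0 x_{p+1}`,
`y_{p−1} = δ_{ℓ−1}^0 y_p`, `y_p = δ_k^0 y_{p+1}`, `k < ℓ`.
Here `a = x_{p-1} = y_{p-1}`, `b = x_p`, `b' = y_p`, `c = x_{p+1} = y_{p+1}`. -/
def Adj1 (X : PCSet) (a b b' c : X.Cell) : Prop :=
  ∃ (n k l : ℕ) (hk : k < n + 1) (hl : l < n + 2) (_ : k < l) (u : X.cube (n + 2)),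
    c = ⟨n + 2, u⟩ ∧
    b = ⟨n + 1, X.face false ⟨l, hl⟩ u⟩ ∧
    b' = ⟨n + 1, X.face false ⟨k, by omega⟩ u⟩ ∧
    a = ⟨n, X.face false ⟨k, hk⟩ (X.face false ⟨l, hl⟩ u)⟩ ∧
    a = ⟨n, X.face false ⟨l - 1, by omega⟩ (X.face false ⟨k, by omega⟩ u)⟩

/-- Adjacency condition (2): `x_p = δ_k^1 x_{p−1}`, `x_{p+1} = δ_ℓ^1 x_p`,
`y_p = δ_{ℓ−1}^1 y_{p−1}`, `y_{p+1} = δ_k^1 y_p`, `k < ℓ`. -/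
def Adj2 (X : PCSet) (a b b' c : X.Cell) : Prop :=
  ∃ (n k l : ℕ) (hk : k < n + 2) (hl : l < n + 1) (_ : k < l) (u : X.cube (n + 2)),
    a = ⟨n + 2, u⟩ ∧
    b = ⟨n + 1, X.face true ⟨k, hk⟩ u⟩ ∧
    b' = ⟨n + 1, X.face true ⟨l - 1, by omega⟩ u⟩ ∧
    c = ⟨n, X.face true ⟨l, hl⟩ (X.face true ⟨k, hk⟩ u)⟩ ∧
    c = ⟨n, X.face true ⟨k, by omega⟩ (X.face true ⟨l - 1, by omega⟩ u)⟩

/-- Adjacency condition (3): `x_p = δ_k^0 δ_ℓ^1 y_p`, `y_{p−1} = δ_k^0 y_p`,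
`y_{p+1} = δ_ℓ^1 y_p`, `k < ℓ`. -/
def Adj3 (X : PCSet) (a b b' c : X.Cell) : Prop :=
  ∃ (n k l : ℕ) (hk : k < n + 1) (hl : l < n + 2) (_ : k < l) (u : X.cube (n + 2)),
    b' = ⟨n + 2, u⟩ ∧
    b = ⟨n, X.face false ⟨k, hk⟩ (X.face true ⟨l, hl⟩ u)⟩ ∧
    a = ⟨n + 1, X.face false ⟨k, by omega⟩ u⟩ ∧
    c = ⟨n + 1, X.face true ⟨l, hl⟩ u⟩

/-- Adjacency condition (4): `x_p = δ_k^1 δ_ℓ^0 y_p`, `y_{p−1} = δ_ℓ^0 y_p`,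
`y_{p+1} = δ_k^1 y_p`, `k < ℓ`. -/
def Adj4 (X : PCSet) (a b b' c : X.Cell) : Prop :=
  ∃ (n k l : ℕ) (hk : k < n + 1) (hl : l < n + 2) (_ : k < l) (u : X.cube (n + 2)),
    b' = ⟨n + 2, u⟩ ∧
    b = ⟨n, X.face true ⟨k, hk⟩ (X.face false ⟨l, hl⟩ u)⟩ ∧
    a = ⟨n + 1, X.face false ⟨l, hl⟩ u⟩ ∧
    c = ⟨n + 1, X.face true ⟨k, by omega⟩ u⟩

/-- One of the four adjacency conditions holds, possibly with the roles of the
two paths exchanged. -/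
def AdjMid (X : PCSet) (a b b' c : X.Cell) : Prop :=
  Adj1 X a b b' c ∨ Adj2 X a b b' c ∨ Adj3 X a b b' c ∨ Adj4 X a b b' c ∨
  Adj1 X a b' b c ∨ Adj2 X a b' b c ∨ Adj3 X a b' b c ∨ Adj4 X a b' b c

/-- Two cube paths are adjacent: they agree everywhere except at exactly one
(interior) index `p`, where one of the four exchange conditions holds. -/
def Adjacent (X : PCSet) (l₁ l₂ : List X.Cell) : Prop :=
  X.IsCubePath l₁ ∧ X.IsCubePath l₂ ∧ l₁.length = l₂.length ∧
  ∃ p : ℕ, 0 < p ∧ p + 1 < l₁.length ∧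
    (∀ q : ℕ, q ≠ p → l₁[q]? = l₂[q]?) ∧
    l₁[p]? ≠ l₂[p]? ∧
    ∃ a b b' c : X.Cell,
      l₁[p - 1]? = some a ∧ l₁[p]? = some b ∧ l₂[p]? = some b' ∧
      l₁[p + 1]? = some c ∧ X.AdjMid a b b' c

/-- Homotopy of cube paths: the reflexive-transitive closure of adjacency. -/
def Homotopic (X : PCSet) : List X.Cell → List X.Cell → Prop :=
  Relation.ReflTransGen X.Adjacent

/-- Iterated application of face maps, parameters in application order. -/
inductive IterFace (X : PCSet) : X.Cell → List (ℕ × Bool) → X.Cell → Prop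
  | nil (c : X.Cell) : IterFace X c [] c
  | cons {n : ℕ} (ν : Bool) (k : Fin (n + 1)) (c : X.cube (n + 1)) {l : List (ℕ × Bool)}
      {res : X.Cell} :
      IterFace X ⟨n, X.face ν k c⟩ l res →
      IterFace X ⟨n + 1, c⟩ ((k.1, ν) :: l) res

/-- `p` is obtained from `c` as `δ_{k_1}^{ν_1}⋯δ_{k_q}^{ν_q} c` where
`k_1 < ⋯ < k_q` (in application order, the index list `ks` is strictly
decreasing). -/
def RepGen (X : PCSet) (c p : X.Cell) (ks : List ℕ) : Prop :=
  List.Pairwise (· > ·) ks ∧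
  ∃ νs : List Bool, νs.length = ks.length ∧ IterFace X c (ks.zip νs) p

/-- `l` is a representing sequence for a precubical path object. -/
def IsRep (X : PCSet) (l : List X.Cell) : Prop :=
  l ≠ [] ∧ l.Nodup ∧ l.Chain' X.Step ∧
  ∀ p : X.Cell, ∃ c ∈ l, (∃ ks, RepGen X c p ks) ∧
    ∀ ks₁ ks₂ : List ℕ, RepGen X c p ks₁ → RepGen X c p ks₂ → ks₁ = ks₂

/-- Morphisms of precubical sets. -/
structure Hom (X Y : PCSet) where
  map : ∀ n : ℕ, X.cube n → Y.cube n
  comm : ∀ (n : ℕ) (ν : Bool) (k : Fin (n + 1)) (x : X.cube (n + 1)),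
    map n (X.face ν k x) = Y.face ν k (map (n + 1) x)

def Hom.id (X : PCSet) : Hom X X where
  map _ x := x
  comm _ _ _ _ := rfl

def Hom.comp {X Y Z : PCSet} (g : Hom Y Z) (f : Hom X Y) : Hom X Z where
  map n x := g.map n (f.map n x)
  comm n ν k x := by (try dsimp only); rw [f.comm, g.comm]

def Hom.cell {X Y : PCSet} (f : Hom X Y) (x : X.Cell) : Y.Cell := ⟨x.1, f.map x.1 x.2⟩

/-- `R` is a precubical subset of the product `X × Y`. -/
def PrecubRel (X Y : PCSet) (R : Set (X.Cell × Y.Cell)) : Prop :=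
  (∀ p ∈ R, p.1.1 = p.2.1) ∧
  ∀ (n : ℕ) (x : X.cube (n + 1)) (y : Y.cube (n + 1)),
    ((⟨n + 1, x⟩, ⟨n + 1, y⟩) : X.Cell × Y.Cell) ∈ R →
    ∀ (ν : Bool) (k : Fin (n + 1)),
      ((⟨n, X.face ν k x⟩, ⟨n, Y.face ν k y⟩) : X.Cell × Y.Cell) ∈ R

/-- One-step bisimulation via a precubical relation (condition (2) of Thm 3.4). -/
def OneStepBisim (X Y : PCSet) (bx : X.Cell) (by' : Y.Cell) : Prop :=
  ∃ R : Set (X.Cell × Y.Cell), PrecubRel X Y R ∧ (bx, by') ∈ R ∧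
    ∀ (n : ℕ) (x₁ : X.cube n) (y₁ : Y.cube n),
      ((⟨n, x₁⟩, ⟨n, y₁⟩) : X.Cell × Y.Cell) ∈ R →
      (∀ (x₂ : X.cube (n + 1)) (k : Fin (n + 1)), x₁ = X.face false k x₂ →
        ∃ y₂ : Y.cube (n + 1), y₁ = Y.face false k y₂ ∧
          ((⟨n + 1, x₂⟩, ⟨n + 1, y₂⟩) : X.Cell × Y.Cell) ∈ R) ∧
      (∀ (y₂ : Y.cube (n + 1)) (k : Fin (n + 1)), y₁ = Y.face false k y₂ →
        ∃ x₂ : X.cube (n + 1), x₁ = X.face false k x₂ ∧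
          ((⟨n + 1, x₂⟩, ⟨n + 1, y₂⟩) : X.Cell × Y.Cell) ∈ R)

/-- Cube-path matching bisimulation (condition (3) of Thm 3.4). -/
def PathBisim (X Y : PCSet) (bx : X.Cell) (by' : Y.Cell) : Prop :=
  ∃ R : Set (X.Cell × Y.Cell), PrecubRel X Y R ∧ (bx, by') ∈ R ∧
    ∀ (x₁ : X.Cell) (y₁ : Y.Cell), (x₁, y₁) ∈ R →
      (∀ lx : List X.Cell, X.IsCubePath lx → lx.head? = some x₁ →
        ∃ ly : List Y.Cell, Y.IsCubePath ly ∧ ly.head? = some y₁ ∧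
          ly.length = lx.length ∧ ∀ pr ∈ lx.zip ly, pr ∈ R) ∧
      (∀ ly : List Y.Cell, Y.IsCubePath ly → ly.head? = some y₁ →
        ∃ lx : List X.Cell, X.IsCubePath lx ∧ lx.head? = some x₁ ∧
          lx.length = ly.length ∧ ∀ pr ∈ lx.zip ly, pr ∈ R)

/-- A fan-shaped cube path: one-dimensional (alternating dimensions 0 and 1)
until it has to build up to its end cube of dimension `n`. -/
def IsFan (X : PCSet) (l : List X.Cell) : Prop :=
  ∃ (n : ℕ) (c : X.cube n), l.getLast? = some ⟨n, c⟩ ∧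
    ∀ (i : ℕ) (hi : i < l.length),
      (i + n + 1 ≤ l.length → (l.get ⟨i, hi⟩).1 = if i % 2 = 0 then 0 else 1) ∧
      (l.length < i + n + 1 → (l.get ⟨i, hi⟩).1 = n + i + 1 - l.length)

/-- The cube path `(x_1, …, x_n, x)` obtained by repeatedly taking lower faces
`x_j = δ_{k_j}^0 ⋯ δ_{k_n}^0 x`, one for each choice of indices `k_j ≤ j`. -/
def lowerChain (X : PCSet) : ∀ (n : ℕ), X.cube n → (∀ j : Fin n, Fin (j.1 + 1)) → List X.Cell
  | 0, x, _ => [⟨0, x⟩]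
  | n + 1, x, ks =>
      lowerChain X n (X.face false (ks ⟨n, Nat.lt_succ_self n⟩) x)
        (fun j => ks ⟨j.1, by omega⟩) ++ [⟨n + 1, x⟩]

end PCSet

open PCSet

/-- A higher-dimensional automaton: a pointed precubical set. -/
structure HDA extends PCSet where
  base : cube 0

/-- Pointed morphisms of higher-dimensional automata. -/
structure HDAHom (X Y : HDA) where
  toHom : Hom X.toPCSet Y.toPCSet
  pointed : toHom.map 0 X.base = Y.base

def HDAHom.id (X : HDA) : HDAHom X X := ⟨Hom.id _, rfl⟩

def HDAHom.comp {X Y Z : HDA} (g : HDAHom Y Z) (f : HDAHom X Y) : HDAHom X Z :=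
  ⟨g.toHom.comp f.toHom, by
    show g.toHom.map 0 (f.toHom.map 0 X.base) = Z.base
    rw [f.pointed, g.pointed]⟩

def HDAHom.IsIso {X Y : HDA} (f : HDAHom X Y) : Prop :=
  ∃ g : HDAHom Y X, g.comp f = HDAHom.id X ∧ f.comp g = HDAHom.id Y

/-- A pointed cube path: a cube path starting in the base point. -/
def HDA.IsPointedPath (X : HDA) (l : List X.toPCSet.Cell) : Prop :=
  X.toPCSet.IsCubePath l ∧ l.head? = some ⟨0, X.base⟩

/-- A cube is reachable if some pointed cube path ends in it. -/
def HDA.Reachable (X : HDA) (x : X.toPCSet.Cell) : Prop :=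
  ∃ l, X.IsPointedPath l ∧ l.getLast? = some x

/-- The type of pointed cube paths of `X` ending in an `n`-cube. -/
def HDA.PPath (X : HDA) (n : ℕ) : Type :=
  { l : List X.toPCSet.Cell //
      X.IsPointedPath l ∧ ∃ c : X.cube n, l.getLast? = some ⟨n, c⟩ }

/-- A pointed precubical path object (object of the category HDP). -/
def HDA.IsPathObj (P : HDA) : Prop :=
  ∃ l, IsRep P.toPCSet l ∧ l.head? = some ⟨0, P.base⟩

/-- A cube path extension: maps the representation of `P` to an initial segment
of the representation of `Q`. -/
def IsExtension {P Q : HDA} (f : HDAHom P Q) : Prop :=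
  ∃ (lp : List P.toPCSet.Cell) (lq : List Q.toPCSet.Cell),
    IsRep P.toPCSet lp ∧ lp.head? = some ⟨0, P.base⟩ ∧
    IsRep Q.toPCSet lq ∧ lq.head? = some ⟨0, Q.base⟩ ∧
    ∃ hle : lp.length ≤ lq.length,
      ∀ (j : ℕ) (hj : j < lp.length),
        f.toHom.cell (lp.get ⟨j, hj⟩) = lq.get ⟨j, lt_of_lt_of_le hj hle⟩

/-- Morphisms of the category HDP: generated by pointed cube path extensions
and isomorphisms between pointed precubical path objects. -/
inductive IsHDPHom : ∀ {P Q : HDA}, HDAHom P Q → Prop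
  | ext {P Q : HDA} (f : HDAHom P Q) :
      P.IsPathObj → Q.IsPathObj → IsExtension f → IsHDPHom f
  | iso {P Q : HDA} (f : HDAHom P Q) :
      P.IsPathObj → Q.IsPathObj → f.IsIso → IsHDPHom f
  | comp {P Q R : HDA} {f : HDAHom P Q} {g : HDAHom Q R} :
      IsHDPHom f → IsHDPHom g → IsHDPHom (g.comp f)

/-- Open maps of HDA: right lifting property with respect to HDP. -/
def IsOpenHom {X Y : HDA} (f : HDAHom X Y) : Prop :=
  ∀ (P Q : HDA) (g : HDAHom P Q), IsHDPHom g →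
    ∀ (p : HDAHom P X) (q : HDAHom Q Y), f.comp p = q.comp g →
      ∃ r : HDAHom Q X, r.comp g = p ∧ f.comp r = q

/-- hd-bisimilarity: a span of open maps. -/
def HdBisimilar (X Y : HDA) : Prop :=
  ∃ (Z : HDA) (f : HDAHom Z X) (g : HDAHom Z Y), IsOpenHom f ∧ IsOpenHom g

/-- A higher-dimensional tree: every cube is the end of exactly one homotopy
class of pointed cube paths. -/
def HDA.IsTree (X : HDA) : Prop :=
  ∀ x : X.toPCSet.Cell,
    (∃ l, X.IsPointedPath l ∧ l.getLast? = some x) ∧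
    ∀ l₁ l₂ : List X.toPCSet.Cell, X.IsPointedPath l₁ → l₁.getLast? = some x →
      X.IsPointedPath l₂ → l₂.getLast? = some x → X.toPCSet.Homotopic l₁ l₂

/-- An unfolding of the HDA `X`: an HDA `Xu` whose `n`-cubes are exactly the
homotopy classes (`cls`) of pointed cube paths of `X` ending in an `n`-cube,
with the face maps, base point and projection of Definition 4.3. -/
structure Unfolding (X : HDA) where
  Xu : HDA
  proj : HDAHom Xu X
  cls : ∀ n : ℕ, X.PPath n → Xu.cube n
  cls_eq : ∀ (n : ℕ) (a b : X.PPath n),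
    cls n a = cls n b ↔ X.toPCSet.Homotopic a.1 b.1
  cls_surj : ∀ (n : ℕ) (x : Xu.cube n), ∃ a, cls n a = x
  cls_base : ∀ a : X.PPath 0, a.1 = [⟨0, X.base⟩] → cls 0 a = Xu.base
  face_true : ∀ (n : ℕ) (k : Fin (n + 1)) (a : X.PPath (n + 1)) (c : X.cube (n + 1)),
    a.1.getLast? = some ⟨n + 1, c⟩ →
    ∀ b : X.PPath n, b.1 = a.1 ++ [⟨n, X.toPCSet.face true k c⟩] →
      Xu.toPCSet.face true k (cls (n + 1) a) = cls n b
  face_false : ∀ (n : ℕ) (k : Fin (n + 1)) (a : X.PPath (n + 1)) (c : X.cube (n + 1)),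
    a.1.getLast? = some ⟨n + 1, c⟩ →
    ∀ b : X.PPath n,
      (Xu.toPCSet.face false k (cls (n + 1) a) = cls n b ↔
        b.1.getLast? = some ⟨n, X.toPCSet.face false k c⟩ ∧
          X.toPCSet.Homotopic (b.1 ++ [⟨n + 1, c⟩]) a.1)
  proj_cls : ∀ (n : ℕ) (a : X.PPath n) (c : X.cube n),
    a.1.getLast? = some ⟨n, c⟩ → proj.toHom.map n (cls n a) = c

/-- The set `δ̃_k^0 [l]` of Definition 4.3: pointed cube paths `l'` with
`l'` ending in `δ_k^0 c` and `l' * (c) ∼ l`. -/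
def predSet (X : HDA) (n : ℕ) (k : Fin (n + 1)) (c : X.cube (n + 1))
    (l : List X.toPCSet.Cell) : Set (List X.toPCSet.Cell) :=
  { l' | X.IsPointedPath l' ∧ l'.getLast? = some ⟨n, X.toPCSet.face false k c⟩ ∧
      X.toPCSet.Homotopic (l' ++ [(⟨n + 1, c⟩ : X.toPCSet.Cell)]) l }

/-- Prefix order on homotopy classes (cubes of an unfolding): some
representatives are prefix-related. -/
def Unfolding.ClassLe {X : HDA} (U : Unfolding X) (c d : U.Xu.toPCSet.Cell) : Prop :=
  ∃ (a : X.PPath c.1) (b : X.PPath d.1),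
    U.cls c.1 a = c.2 ∧ U.cls d.1 b = d.2 ∧ a.1 <+: b.1

/-- `h` is the morphism of unfoldings induced by `g` (i.e. `g̃`). -/
def IsUnfoldMap {X Y : HDA} (UX : Unfolding X) (UY : Unfolding Y)
    (g : HDAHom X Y) (h : HDAHom UX.Xu UY.Xu) : Prop :=
  ∀ (n : ℕ) (a : X.PPath n), ∃ b : Y.PPath n,
    b.1 = a.1.map g.toHom.cell ∧ h.toHom.map n (UX.cls n a) = UY.cls n b

/-- Open maps in the category HDAh: right lifting property with respect to
HDPh (morphisms of unfoldings corresponding to HDP-morphisms under the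
projections). -/
def IsOpenHDAh {X Y : HDA} (UX : Unfolding X) (UY : Unfolding Y)
    (f : HDAHom UX.Xu UY.Xu) : Prop :=
  ∀ (P Q : HDA) (UP : Unfolding P) (UQ : Unfolding Q) (g : HDAHom UP.Xu UQ.Xu),
    (∃ g₀ : HDAHom P Q, IsHDPHom g₀ ∧ UQ.proj.comp g = g₀.comp UP.proj) →
    ∀ (p : HDAHom UP.Xu UX.Xu) (q : HDAHom UQ.Xu UY.Xu),
      f.comp p = q.comp g →
      ∃ r : HDAHom UQ.Xu UX.Xu, r.comp g = p ∧ f.comp r = q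

/-- Homotopy bisimilarity: a span of open maps in HDAh. -/
def HomotopyBisimilar (X Y : HDA) : Prop :=
  ∃ (Z : HDA) (UX : Unfolding X) (UY : Unfolding Y) (UZ : Unfolding Z)
    (f : HDAHom UZ.Xu UX.Xu) (g : HDAHom UZ.Xu UY.Xu),
    IsOpenHDAh UZ UX f ∧ IsOpenHDAh UZ UY g

/-- Prefix-matching bisimulation on unfoldings (condition (4) of Prop 6.5). -/
def PrefixBisim {X Y : HDA} (UX : Unfolding X) (UY : Unfolding Y) : Prop :=
  ∃ R : Set (UX.Xu.toPCSet.Cell × UY.Xu.toPCSet.Cell),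
    PrecubRel UX.Xu.toPCSet UY.Xu.toPCSet R ∧
    ((⟨0, UX.Xu.base⟩, ⟨0, UY.Xu.base⟩) : _ × _) ∈ R ∧
    ∀ (c : UX.Xu.toPCSet.Cell) (d : UY.Xu.toPCSet.Cell), (c, d) ∈ R →
      (∀ c₂, UX.ClassLe c c₂ → ∃ d₂, UY.ClassLe d d₂ ∧ (c₂, d₂) ∈ R) ∧
      (∀ d₂, UY.ClassLe d d₂ → ∃ c₂, UX.ClassLe c c₂ ∧ (c₂, d₂) ∈ R)

/-- One refinement step of the fixed-point algorithm deciding hd-bisimilarity. -/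
def refineStep (X Y : HDA) (S : Set (X.toPCSet.Cell × Y.toPCSet.Cell)) :
    Set (X.toPCSet.Cell × Y.toPCSet.Cell) :=
  { p | p ∈ S ∧ p.1.1 = p.2.1 ∧
    (∀ (n : ℕ) (x : X.cube (n + 1)) (y : Y.cube (n + 1)),
      p = (⟨n + 1, x⟩, ⟨n + 1, y⟩) →
      ∀ (ν : Bool) (k : Fin (n + 1)),
        ((⟨n, X.toPCSet.face ν k x⟩, ⟨n, Y.toPCSet.face ν k y⟩) : _ × _) ∈ S) ∧
    (∀ (n : ℕ) (x₁ : X.cube n) (y₁ : Y.cube n),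
      p = (⟨n, x₁⟩, ⟨n, y₁⟩) →
      (∀ (x₂ : X.cube (n + 1)) (k : Fin (n + 1)), x₁ = X.toPCSet.face false k x₂ →
        ∃ y₂ : Y.cube (n + 1), y₁ = Y.toPCSet.face false k y₂ ∧
          ((⟨n + 1, x₂⟩, ⟨n + 1, y₂⟩) : _ × _) ∈ S) ∧
      (∀ (y₂ : Y.cube (n + 1)) (k : Fin (n + 1)), y₁ = Y.toPCSet.face false k y₂ →
        ∃ x₂ : X.cube (n + 1), x₁ = X.toPCSet.face false k x₂ ∧
          ((⟨n + 1, x₂⟩, ⟨n + 1, y₂⟩) : _ × _) ∈ S)) }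

namespace PCSet
variable {X : PCSet}

lemma getElem?_concat {α : Type} (l : List α) (z : α) (q : ℕ) :
    (l ++ [z])[q]? = if q < l.length then l[q]? else if q = l.length then some z else none := by
  rcases lt_trichotomy q l.length with h|h|h
  · simp [List.getElem?_append_left h, h]
  · simp [h]
  · rw [List.getElem?_append_right (by omega)]
    rw [if_neg (by omega), if_neg (by omega)]
    apply List.getElem?_eq_none
    simp; omega

lemma lowerChain_length (n : ℕ) (x : X.cube n) (ks : ∀ j : Fin n, Fin (j.1 + 1)) :
    (X.lowerChain n x ks).length = n + 1 := by
  induction n with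
  | zero => rfl
  | succ n ih => simp [lowerChain, ih]

lemma lowerChain_getLast? (n : ℕ) (x : X.cube n) (ks : ∀ j : Fin n, Fin (j.1 + 1)) :
    (X.lowerChain n x ks).getLast? = some ⟨n, x⟩ := by
  cases n with
  | zero => rfl
  | succ n => simp [lowerChain]

lemma lowerChain_chain' (n : ℕ) (x : X.cube n) (ks : ∀ j : Fin n, Fin (j.1 + 1)) :
    (X.lowerChain n x ks).Chain' X.Step := by
  induction n with
  | zero => exact List.isChain_singleton _
  | succ n ih =>
    rw [lowerChain]; unfold List.Chain'; rw [List.isChain_append]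
    refine ⟨ih _ _, List.isChain_singleton _, ?_⟩
    intro a ha b hb
    rw [lowerChain_getLast?] at ha
    simp at ha hb
    subst ha; subst hb
    exact Or.inl ⟨n, _, x, rfl, rfl⟩

lemma lowerChain_isCubePath (n : ℕ) (x : X.cube n) (ks : ∀ j : Fin n, Fin (j.1 + 1)) :
    X.IsCubePath (X.lowerChain n x ks) := by
  refine ⟨?_, lowerChain_chain' n x ks⟩
  intro h
  have := lowerChain_length (X := X) n x ks
  rw [h] at this; simp at this

lemma isCubePath_concat {l : List X.Cell} {e z : X.Cell}
    (h : X.IsCubePath l) (hl : l.getLast? = some e) (hs : X.Step e z) :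
    X.IsCubePath (l ++ [z]) := by
  refine ⟨by simp, ?_⟩
  unfold List.Chain'; rw [List.isChain_append]
  refine ⟨h.2, List.isChain_singleton _, ?_⟩
  intro a ha b hb
  rw [hl] at ha; simp at ha hb; subst ha; subst hb; exact hs

lemma adjacent_getLast? {l₁ l₂ : List X.Cell} (h : X.Adjacent l₁ l₂) :
    l₁.getLast? = l₂.getLast? := by
  obtain ⟨h1, h2, hlen, p, hp0, hp1, hq, -⟩ := h
  rw [List.getLast?_eq_getElem?, List.getLast?_eq_getElem?, ← hlen]
  exact hq _ (by omega)

lemma homotopic_getLast? {l₁ l₂ : List X.Cell} (h : X.Homotopic l₁ l₂) :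
    l₁.getLast? = l₂.getLast? := by
  induction h with
  | refl => rfl
  | tail _ h ih => exact ih.trans (adjacent_getLast? h)

lemma adjMid_swap {a b b' c : X.Cell} (h : X.AdjMid a b b' c) : X.AdjMid a b' b c := by
  unfold AdjMid at *; tauto

lemma adjacent_symm {l₁ l₂ : List X.Cell} (h : X.Adjacent l₁ l₂) : X.Adjacent l₂ l₁ := by
  obtain ⟨h1, h2, hlen, p, hp0, hp1, hq, hne, a, b, b', c, ha, hb, hb', hc, hm⟩ := h
  refine ⟨h2, h1, hlen.symm, p, hp0, by omega, fun q hq' => (hq q hq').symm, fun h => hne h.symm,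
    a, b', b, c, ?_, hb', hb, ?_, adjMid_swap hm⟩
  · rw [← hq _ (by omega)]; exact ha
  · rw [← hq _ (by omega)]; exact hc

lemma homotopic_symm {l₁ l₂ : List X.Cell} (h : X.Homotopic l₁ l₂) : X.Homotopic l₂ l₁ := by
  induction h with
  | refl => exact Relation.ReflTransGen.refl
  | tail _ h ih => exact Relation.ReflTransGen.head (adjacent_symm h) ih

lemma adjacent_concat {l₁ l₂ : List X.Cell} {z e : X.Cell} (h : X.Adjacent l₁ l₂)
    (hl : l₁.getLast? = some e) (hs : X.Step e z) :
    X.Adjacent (l₁ ++ [z]) (l₂ ++ [z]) := by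
  obtain ⟨h1, h2, hlen, p, hp0, hp1, hq, hne, a, b, b', c, ha, hb, hb', hc, hm⟩ := h
  have hl2 : l₂.getLast? = some e := by
    rw [← hl, List.getLast?_eq_getElem?, List.getLast?_eq_getElem?, hlen]
    exact (hq _ (by omega)).symm
  refine ⟨isCubePath_concat h1 hl hs, isCubePath_concat h2 hl2 hs, by simp [hlen],
    p, hp0, by simp; omega, ?_, ?_, a, b, b', c, ?_, ?_, ?_, ?_, hm⟩
  · intro q hq'
    rw [getElem?_concat, getElem?_concat, hlen]
    split
    · rw [hq q hq']
    · rfl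
  · rw [getElem?_concat, getElem?_concat, hlen, if_pos (by omega), if_pos (by omega)]
    exact hne
  · rw [getElem?_concat, if_pos (by omega)]; exact ha
  · rw [getElem?_concat, if_pos (by omega)]; exact hb
  · rw [getElem?_concat, if_pos (by omega)]; exact hb'
  · rw [getElem?_concat, if_pos (by omega)]; exact hc

lemma homotopic_concat {l₁ l₂ : List X.Cell} {z e : X.Cell} (h : X.Homotopic l₁ l₂)
    (hl : l₁.getLast? = some e) (hs : X.Step e z) :
    X.Homotopic (l₁ ++ [z]) (l₂ ++ [z]) := by
  induction h with
  | refl => exact Relation.ReflTransGen.refl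
  | tail hprev hadj ih =>
    refine Relation.ReflTransGen.tail ih (adjacent_concat hadj ?_ hs)
    rw [← homotopic_getLast? hprev]; exact hl


lemma lowerChain_succ (n : ℕ) (x : X.cube (n + 1)) (ms : ∀ j : Fin (n + 1), Fin (j.1 + 1)) :
    X.lowerChain (n + 1) x ms =
      X.lowerChain n (X.face false (ms ⟨n, Nat.lt_succ_self n⟩) x)
        (fun j => ms ⟨j.1, by omega⟩) ++ [⟨n + 1, x⟩] := rfl

lemma key_adj (m : ℕ) (x : X.cube (m + 2)) (K L : ℕ) (hK : K < m + 2) (hL : L < m + 2)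
    (hKL : K < L) (ks ls : ∀ j : Fin (m + 1), Fin (j.1 + 1))
    (IH : ∀ (y : X.cube (m + 1)) (ks ls : ∀ j : Fin (m + 1), Fin (j.1 + 1)),
      X.Homotopic (X.lowerChain (m + 1) y ks) (X.lowerChain (m + 1) y ls)) :
    X.Homotopic
      (X.lowerChain (m + 1) (X.face false ⟨K, hK⟩ x) ks ++ [⟨m + 2, x⟩])
      (X.lowerChain (m + 1) (X.face false ⟨L, hL⟩ x) ls ++ [⟨m + 2, x⟩]) := by
  have hk : K < m + 1 := by omega
  set inner : X.cube m := X.face false ⟨K, hk⟩ (X.face false ⟨L, hL⟩ x) with hinner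
  have hprecub : inner =
      X.face false ⟨L - 1, by omega⟩ (X.face false ⟨K, by omega⟩ x) :=
    X.precub false false K L hk hL hKL x
  set zeros : ∀ j : Fin m, Fin (j.1 + 1) := fun j => ⟨0, by omega⟩ with hzeros
  set pre : List X.Cell := X.lowerChain m inner zeros with hpre
  set bA : X.Cell := ⟨m + 1, X.face false ⟨L, hL⟩ x⟩ with hbA
  set bB : X.Cell := ⟨m + 1, X.face false ⟨K, hK⟩ x⟩ with hbB
  set cc : X.Cell := ⟨m + 2, x⟩ with hcc
  set msA : ∀ j : Fin (m + 1), Fin (j.1 + 1) :=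
    fun j => if h : j.1 = m then ⟨K, by omega⟩ else ⟨0, by omega⟩ with hmsA
  set msB : ∀ j : Fin (m + 1), Fin (j.1 + 1) :=
    fun j => if h : j.1 = m then ⟨L - 1, by omega⟩ else ⟨0, by omega⟩ with hmsB
  have topA : msA ⟨m, Nat.lt_succ_self m⟩ = (⟨K, by omega⟩ : Fin (m + 1)) := dif_pos rfl
  have topB : msB ⟨m, Nat.lt_succ_self m⟩ = (⟨L - 1, by omega⟩ : Fin (m + 1)) := dif_pos rfl
  have resA : (fun j : Fin m => msA ⟨j.1, by omega⟩) = zeros :=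
    funext fun j => dif_neg (Nat.ne_of_lt j.isLt)
  have resB : (fun j : Fin m => msB ⟨j.1, by omega⟩) = zeros :=
    funext fun j => dif_neg (Nat.ne_of_lt j.isLt)
  have eqA : X.lowerChain (m + 1) (X.face false ⟨L, hL⟩ x) msA = pre ++ [bA] := by
    rw [lowerChain_succ, topA, resA]
  have eqB : X.lowerChain (m + 1) (X.face false ⟨K, hK⟩ x) msB = pre ++ [bB] := by
    rw [lowerChain_succ, topB, resB, hpre, hprecub]
  have hlenpre : pre.length = m + 1 := lowerChain_length m inner zeros
  have hprelast : pre.getLast? = some ⟨m, inner⟩ := lowerChain_getLast? m inner zeros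
  have hpm : pre[m]? = some ⟨m, inner⟩ := by
    rw [← hprelast, List.getLast?_eq_getElem?, hlenpre]
    norm_num
  have e1 : ∀ (b : X.Cell) (q : ℕ), ((pre ++ [b]) ++ [cc])[q]? =
      if q < m + 1 then pre[q]? else if q = m + 1 then some b
      else if q = m + 2 then some cc else none := by
    intro b q
    rw [getElem?_concat, getElem?_concat]
    simp only [List.length_append, List.length_singleton, hlenpre]
    split_ifs <;> first | rfl | omega
  have hcp : X.IsCubePath pre := lowerChain_isCubePath m inner zeros
  have stepA : X.Step (⟨m, inner⟩ : X.Cell) bA :=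
    Or.inl ⟨m, ⟨K, hk⟩, X.face false ⟨L, hL⟩ x, rfl, rfl⟩
  have stepB : X.Step (⟨m, inner⟩ : X.Cell) bB := by
    rw [hprecub]
    exact Or.inl ⟨m, ⟨L - 1, by omega⟩, X.face false ⟨K, hK⟩ x, rfl, rfl⟩
  have stepAc : X.Step bA cc := Or.inl ⟨m + 1, ⟨L, hL⟩, x, rfl, rfl⟩
  have stepBc : X.Step bB cc := Or.inl ⟨m + 1, ⟨K, hK⟩, x, rfl, rfl⟩
  have cpA : X.IsCubePath ((pre ++ [bA]) ++ [cc]) :=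
    isCubePath_concat (isCubePath_concat hcp hprelast stepA) (by simp) stepAc
  have cpB : X.IsCubePath ((pre ++ [bB]) ++ [cc]) :=
    isCubePath_concat (isCubePath_concat hcp hprelast stepB) (by simp) stepBc
  have eA : ∀ b : X.Cell, ((pre ++ [b]) ++ [cc])[m + 1]? = some b := by
    intro b; rw [e1]; split_ifs <;> first | rfl | omega
  have eC : ∀ b : X.Cell, ((pre ++ [b]) ++ [cc])[m + 2]? = some cc := by
    intro b; rw [e1]; split_ifs <;> first | rfl | omega
  have eP : ∀ b : X.Cell, ((pre ++ [b]) ++ [cc])[m + 1 - 1]? = pre[m]? := by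
    intro b; rw [e1]; split_ifs <;> first | rfl | omega
  have h2 : X.Homotopic ((pre ++ [bB]) ++ [cc]) ((pre ++ [bA]) ++ [cc]) := by
    by_cases hbb : X.face false ⟨L, hL⟩ x = X.face false ⟨K, hK⟩ x
    · have hab : bA = bB := by rw [hbA, hbB, hbb]
      rw [hab]
      exact Relation.ReflTransGen.refl
    · refine Relation.ReflTransGen.single (adjacent_symm ?_)
      refine ⟨cpA, cpB, by simp, m + 1, by omega, by simp [hlenpre], ?_, ?_,
        ⟨m, inner⟩, bA, bB, cc, ?_, ?_, ?_, ?_, ?_⟩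
      · intro q hq'
        rw [e1, e1]
        split_ifs <;> first | rfl | omega
      · rw [eA, eA]
        intro h
        have h' := Option.some.inj h
        rw [hbA, hbB] at h'
        exact hbb (by simpa using h')
      · rw [eP]; exact hpm
      · exact eA bA
      · exact eA bB
      · exact eC bA
      · exact Or.inl ⟨m, K, L, hk, hL, hKL, x, hcc, hbA, hbB, rfl,
          congrArg (Sigma.mk m) hprecub⟩
  have h1 : X.Homotopic (X.lowerChain (m + 1) (X.face false ⟨K, hK⟩ x) ks ++ [cc])
      ((pre ++ [bB]) ++ [cc]) := by
    rw [← eqB]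
    exact homotopic_concat (IH _ ks msB) (lowerChain_getLast? _ _ _) stepBc
  have h3 : X.Homotopic ((pre ++ [bA]) ++ [cc]) 
      (X.lowerChain (m + 1) (X.face false ⟨L, hL⟩ x) ls ++ [cc]) := by
    rw [← eqA]
    exact homotopic_concat (IH _ msA ls) (lowerChain_getLast? _ _ _) stepAc
  exact Relation.ReflTransGen.trans h1 (Relation.ReflTransGen.trans h2 h3)

end PCSet


/-- Lemma 4.4: any two cube paths `(x_1, …, x_n, x)` obtained from `x` by
iterated lower faces `x_j = δ_{k_j}^0 ⋯ δ_{k_n}^0 x` (with `k_j ≤ j`) are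
homotopic. -/
theorem lowerChain_homotopic (X : PCSet) (n : ℕ) (x : X.cube n)
    (ks ls : ∀ j : Fin n, Fin (j.1 + 1)) :
    X.Homotopic (X.lowerChain n x ks) (X.lowerChain n x ls) := by
  induction n with
  | zero => exact Relation.ReflTransGen.refl
  | succ n ih =>
    rw [PCSet.lowerChain_succ, PCSet.lowerChain_succ]
    set K := ks ⟨n, Nat.lt_succ_self n⟩ with hKdef
    set L := ls ⟨n, Nat.lt_succ_self n⟩ with hLdef
    rcases lt_trichotomy K.1 L.1 with h | h | h
    · cases n with
      | zero => have := K.isLt; have := L.isLt; omega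
      | succ m => exact PCSet.key_adj m x K.1 L.1 K.isLt L.isLt h _ _ ih
    · have hKL : K = L := Fin.ext h
      rw [hKL]
      exact PCSet.homotopic_concat (ih _ _ _) (PCSet.lowerChain_getLast? _ _ _)
        (Or.inl ⟨n, L, x, rfl, rfl⟩)
    · cases n with
      | zero => have := K.isLt; have := L.isLt; omega
      | succ m =>
        exact PCSet.homotopic_symm (PCSet.key_adj m x L.1 K.1 L.isLt K.isLt h _ _ ih)
end

section
/- Let (x_1,…,x_m) be a pointed cube path in a higher-dimensional automaton, let n_j = dim x_j denote the dimension of x_j, and let T(x_1,…,x_m) = n_1 + ⋯ + n_m. Then: (i) j − n_j is odd for all j = 1,…,m; (ii) T(x_1,…,x_m) ≥ (n_m² + m − 1)/2, with equality if and only if (x_1,…,x_m) is fan-shaped; and (iii) T(x_1,…,x_m) ≡ (n_m² + m − 1)/2 (mod 2). -/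
set_option autoImplicit false

open PCSet

private lemma sum_mod2 (m : ℕ) : ∑ i ∈ Finset.range m, (i % 2) = m / 2 := by
  induction m with
  | zero => simp
  | succ m ih => rw [Finset.sum_range_succ, ih]; omega

private def fanL (n m i : ℕ) : ℕ := if i + n + 1 ≤ m then i % 2 else n + i + 1 - m

private lemma sumL : ∀ (n m : ℕ), n + 1 ≤ m → (m - 1 - n) % 2 = 0 →
    ∑ i ∈ Finset.range m, 2 * fanL n m i = n ^ 2 + m - 1 := by
  intro n
  induction n with
  | zero =>
    intro m hm hpar
    have h1 : ∀ i ∈ Finset.range m, 2 * fanL 0 m i = 2 * (i % 2) := by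
      intro i hi; rw [Finset.mem_range] at hi
      unfold fanL; rw [if_pos (by omega)]
    rw [Finset.sum_congr rfl h1, ← Finset.mul_sum, sum_mod2]
    omega
  | succ n ih =>
    intro m hm hpar
    obtain ⟨m', rfl⟩ : ∃ m', m = m' + 1 := ⟨m - 1, by omega⟩
    rw [Finset.sum_range_succ]
    have h1 : ∀ i ∈ Finset.range m', 2 * fanL (n+1) (m'+1) i = 2 * fanL n m' i := by
      intro i hi; rw [Finset.mem_range] at hi
      unfold fanL
      by_cases hc : i + n + 1 ≤ m'
      · rw [if_pos (by omega), if_pos hc]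
      · rw [if_neg (by omega), if_neg hc]; omega
    rw [Finset.sum_congr rfl h1, ih m' (by omega) (by omega)]
    unfold fanL
    rw [if_neg (by omega)]
    have e1 : (n+1)^2 = n^2 + 2*n + 1 := by ring
    omega

private lemma key (m n : ℕ) (d : ℕ → ℕ) (hm : 0 < m) (d0 : d 0 = 0) (dlast : d (m-1) = n)
    (dstep : ∀ i, i + 1 < m → d (i+1) = d i + 1 ∨ d i = d (i+1) + 1) :
    (∀ i < m, d i % 2 = i % 2 ∧ d i ≤ i) ∧
    (n^2 + m - 1 ≤ 2 * ∑ i ∈ Finset.range m, d i) ∧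
    (2 * ∑ i ∈ Finset.range m, d i = n^2 + m - 1 ↔ ∀ i < m, d i = fanL n m i) ∧
    (∑ i ∈ Finset.range m, d i) % 2 = ((n^2 + m - 1)/2) % 2 := by
  have hpq : ∀ i < m, d i % 2 = i % 2 ∧ d i ≤ i := by
    intro i
    induction i with
    | zero => intro _; simp [d0]
    | succ i ih =>
      intro hi
      have h1 := dstep i hi
      have h2 := ih (by omega)
      omega
  have hR : ∀ t i, i + t + 1 = m → n ≤ d i + t := by
    intro t
    induction t with
    | zero =>
      intro i hi
      have : i = m - 1 := by omega
      rw [this, dlast]; omega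
    | succ t ih =>
      intro i hi
      have h1 := dstep i (by omega)
      have h2 := ih (i+1) (by omega)
      omega
  have hnm : n ≤ m - 1 := by
    have := (hpq (m-1) (by omega)).2; omega
  have hparmn : n % 2 = (m-1) % 2 := by
    have := (hpq (m-1) (by omega)).1; omega
  have hlb : ∀ i < m, fanL n m i ≤ d i := by
    intro i hi
    unfold fanL
    by_cases hc : i + n + 1 ≤ m
    · rw [if_pos hc]; have := (hpq i hi).1; omega
    · rw [if_neg hc]
      have := hR (m - 1 - i) i (by omega)
      omega
  have hparL : ∀ i < m, d i % 2 = fanL n m i % 2 := by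
    intro i hi
    unfold fanL
    have h1 := (hpq i hi).1
    by_cases hc : i + n + 1 ≤ m
    · rw [if_pos hc]; omega
    · rw [if_neg hc]; omega
  have hK : ∑ i ∈ Finset.range m, 2 * fanL n m i = n ^ 2 + m - 1 :=
    sumL n m (by omega) (by omega)
  have h2A : 2 * ∑ i ∈ Finset.range m, d i = ∑ i ∈ Finset.range m, 2 * d i :=
    Finset.mul_sum _ _ _
  have hsplit : ∑ i ∈ Finset.range m, 2 * d i
      = (∑ i ∈ Finset.range m, 2 * fanL n m i)
        + ∑ i ∈ Finset.range m, (2 * d i - 2 * fanL n m i) := by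
    rw [← Finset.sum_add_distrib]
    apply Finset.sum_congr rfl
    intro i hi
    have := hlb i (Finset.mem_range.1 hi); omega
  have h4 : 4 ∣ ∑ i ∈ Finset.range m, (2 * d i - 2 * fanL n m i) := by
    apply Finset.dvd_sum
    intro i hi
    have h1 := hlb i (Finset.mem_range.1 hi)
    have h2 := hparL i (Finset.mem_range.1 hi)
    omega
  refine ⟨hpq, by omega, ?_, by omega⟩
  constructor
  · intro heq i hi
    have hz : ∑ i ∈ Finset.range m, (2 * d i - 2 * fanL n m i) = 0 := by omega
    have := (Finset.sum_eq_zero_iff.1 hz) i (Finset.mem_range.2 hi)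
    have := hlb i hi
    omega
  · intro hfan
    have : ∑ i ∈ Finset.range m, 2 * d i = ∑ i ∈ Finset.range m, 2 * fanL n m i := by
      apply Finset.sum_congr rfl
      intro i hi; rw [hfan i (Finset.mem_range.1 hi)]
    omega

/-- For a pointed cube path `(x_1, …, x_m)` with `n_j = dim x_j` and
`T = n_1 + ⋯ + n_m`: (i) `j − n_j` is odd for all `j`; (ii)
`T ≥ (n_m² + m − 1)/2`, with equality iff the path is fan-shaped; and (iii)
`T ≡ (n_m² + m − 1)/2 (mod 2)`. -/
theorem pointed_path_dimension_count (X : HDA) (l : List X.toPCSet.Cell)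
    (h : X.IsPointedPath l) (n : ℕ) (c : X.cube n)
    (hl : l.getLast? = some ⟨n, c⟩) :
    (∀ (i : ℕ) (hi : i < l.length), Odd (i + 1 - (l.get ⟨i, hi⟩).1)) ∧
    (n ^ 2 + l.length - 1 ≤ 2 * (l.map Sigma.fst).sum) ∧
    (2 * (l.map Sigma.fst).sum = n ^ 2 + l.length - 1 ↔ IsFan X.toPCSet l) ∧
    (l.map Sigma.fst).sum % 2 = ((n ^ 2 + l.length - 1) / 2) % 2 := by
    classical
  obtain ⟨⟨hne, hchain⟩, hhead⟩ := h
  have hm : 0 < l.length := List.length_pos_iff.2 hne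
  set d : ℕ → ℕ := fun i => (l.getD i ⟨0, X.base⟩).1 with hd
  have hd_get : ∀ (i : ℕ) (hi : i < l.length), (l.get ⟨i, hi⟩).1 = d i := by
    intro i hi
    simp only [hd]
    rw [List.getD_eq_getElem (hn := hi), List.get_eq_getElem]
  have d0 : d 0 = 0 := by
    rw [← hd_get 0 hm]
    have h1 : l.head? = some (l.head hne) := List.head?_eq_head hne
    rw [hhead] at h1
    have h2 : l.head hne = ⟨0, X.base⟩ := (Option.some.inj h1).symm
    rw [List.get_mk_zero, h2]
  have dlast : d (l.length - 1) = n := by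
    rw [← hd_get _ (by omega)]
    have h1 : l.getLast? = some (l.getLast hne) := List.getLast?_eq_getLast hne
    rw [hl] at h1
    have h2 : l.getLast hne = ⟨n, c⟩ := (Option.some.inj h1).symm
    rw [List.get_eq_getElem, ← List.getLast_eq_getElem hne, h2]
  have step_dim : ∀ {x y : X.toPCSet.Cell}, X.toPCSet.Step x y →
      (y.1 = x.1 + 1 ∨ x.1 = y.1 + 1) := by
    rintro x y (⟨n', k', c', rfl, rfl⟩ | ⟨n', k', c', rfl, rfl⟩)
    · left; rfl
    · right; rfl
  have hchain' := List.isChain_iff_getElem.1 hchain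
  have dstep : ∀ i, i + 1 < l.length → d (i+1) = d i + 1 ∨ d i = d (i+1) + 1 := by
    intro i hi
    have h1 := step_dim (hchain' i (by omega))
    rw [← hd_get i (by omega), ← hd_get (i+1) (by omega)]
    exact h1
  obtain ⟨hpq, hineq, hiff, hmod⟩ := key l.length n d hm d0 dlast dstep
  have hT : (l.map Sigma.fst).sum = ∑ i ∈ Finset.range l.length, d i := by
    rw [← Fin.sum_univ_eq_sum_range, ← List.sum_ofFn]
    congr 1
    apply List.ext_get (by simp)
    intro i h1 h2
    simp only [List.get_eq_getElem, List.getElem_map, List.getElem_ofFn, List.get_ofFn, Fin.cast_mk]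
    exact hd_get i (by simpa using h1)
  refine ⟨?_, ?_, ?_, ?_⟩
  · intro i hi
    have h1 := hpq i hi
    rw [Nat.odd_iff, hd_get i hi]
    omega
  · rw [hT]; exact hineq
  · rw [hT, hiff]
    constructor
    · intro hfan
      refine ⟨n, c, hl, ?_⟩
      intro i hi
      have h1 := hfan i hi
      constructor
      · intro hle
        rw [hd_get i hi, h1]
        unfold fanL
        rw [if_pos hle]
        split_ifs <;> omega
      · intro hgt
        rw [hd_get i hi, h1]
        unfold fanL
        rw [if_neg (by omega)]
    · rintro ⟨n', c', hlast', hcond⟩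
      have hn : n = n' := by
        rw [hl] at hlast'
        exact congrArg Sigma.fst (Option.some.inj hlast')
      subst hn
      intro i hi
      obtain ⟨c1, c2⟩ := hcond i hi
      unfold fanL
      by_cases hc : i + n + 1 ≤ l.length
      · have h1 := c1 hc
        rw [hd_get i hi] at h1
        rw [if_pos hc, h1]
        split_ifs <;> omega
      · have h1 := c2 (by omega)
        rw [hd_get i hi] at h1
        rw [if_neg hc, h1]
  · rw [hT]; exact hmod
end

section
/- For any HDA X, the unfolding X̃ is a higher-dimensional tree. Moreover, if X itself is a higher-dimensional tree, then the projection π_X : X̃ → X is an isomorphism of HDA. -/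
set_option autoImplicit false

open PCSet

namespace UnfAux
open PCSet

lemma cell_dim {C : ℕ → Type} {n m : ℕ} {c : C n} {d : C m}
    (h : (⟨n, c⟩ : Sigma C) = ⟨m, d⟩) : n = m := congrArg Sigma.fst h

lemma cell_eq {C : ℕ → Type} {n : ℕ} {c d : C n}
    (h : (⟨n, c⟩ : Sigma C) = ⟨n, d⟩) : c = d := by
  simpa using h

variable {X : HDA} (U : Unfolding X)

/-- Build a `PPath`. -/
def mkPP (l : List X.toPCSet.Cell) (h1 : X.IsPointedPath l) {n : ℕ} {c : X.cube n}
    (h2 : l.getLast? = some ⟨n, c⟩) : X.PPath n := ⟨l, h1, c, h2⟩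

lemma pp_dim {n m : ℕ} (pp : X.PPath n) {c : X.cube m}
    (h : pp.1.getLast? = some ⟨m, c⟩) : n = m := by
  obtain ⟨c', hc'⟩ := pp.2.2
  rw [hc'] at h
  exact cell_dim (Option.some.inj h)

lemma pp_ext {n : ℕ} (pp pp' : X.PPath n) (h : pp.1 = pp'.1) : pp = pp' := Subtype.ext h

/-- `ξ` is the class of the length-`(j+1)` prefix of `a`. -/
def LiftAt (a : List X.toPCSet.Cell) (j : ℕ) (ξ : U.Xu.toPCSet.Cell) : Prop :=
  ∃ (n : ℕ) (pp : X.PPath n), pp.1 = a.take (j + 1) ∧ ξ = ⟨n, U.cls n pp⟩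

lemma liftAt_unique {a : List X.toPCSet.Cell} {j : ℕ} {ξ ξ' : U.Xu.toPCSet.Cell}
    (h : LiftAt U a j ξ) (h' : LiftAt U a j ξ') : ξ = ξ' := by
  obtain ⟨n, pp, hpp, rfl⟩ := h
  obtain ⟨n', pp', hpp', rfl⟩ := h'
  obtain ⟨c', hc'⟩ := pp'.2.2
  have hd : n = n' := pp_dim pp (by rw [hpp, ← hpp']; exact hc')
  subst hd
  rw [pp_ext pp pp' (by rw [hpp, hpp'])]

lemma getLast?_take {a : List X.toPCSet.Cell} {j : ℕ} (h : j < a.length) :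
    (a.take (j + 1)).getLast? = some a[j] := by
  rw [List.take_succ, List.getElem?_eq_getElem h]
  exact List.getLast?_concat

lemma head?_take {a : List X.toPCSet.Cell} (j : ℕ) :
    (a.take (j + 1)).head? = a.head? := by
  cases a <;> simp

/-- The length-`(j+1)` prefix of a pointed cube path, as a pointed path. -/
lemma take_pointed {a : List X.toPCSet.Cell} (h : X.IsPointedPath a) (j : ℕ) :
    X.IsPointedPath (a.take (j + 1)) := by
  refine ⟨⟨?_, h.1.2.prefix (List.take_prefix _ _)⟩, ?_⟩
  · cases a
    · exact absurd rfl h.1.1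
    · simp
  · rw [head?_take]; exact h.2

lemma liftAt_exists {a : List X.toPCSet.Cell} (h : X.IsPointedPath a) {j : ℕ}
    (hj : j < a.length) : ∃ ξ, LiftAt U a j ξ := by
  refine ⟨⟨a[j].1, U.cls a[j].1 (mkPP (a.take (j+1)) (take_pointed h j)
    (n := a[j].1) (c := a[j].2) ?_)⟩, a[j].1, _, rfl, rfl⟩
  rw [getLast?_take hj]

end UnfAux
namespace UnfAux
open PCSet
variable {X : HDA} (U : Unfolding X)

lemma cls_face_false {n : ℕ} (k : Fin (n + 1)) (ppa : X.PPath (n + 1)) (ppb : X.PPath n)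
    {c : X.cube (n + 1)} (hlast : ppa.1.getLast? = some ⟨n + 1, c⟩)
    (hblast : ppb.1.getLast? = some ⟨n, X.toPCSet.face false k c⟩)
    (hhom : X.toPCSet.Homotopic (ppb.1 ++ [(⟨n + 1, c⟩ : X.toPCSet.Cell)]) ppa.1) :
    U.Xu.toPCSet.face false k (U.cls (n + 1) ppa) = U.cls n ppb :=
  (U.face_false n k ppa c hlast ppb).mpr ⟨hblast, hhom⟩

lemma cls_face_true {n : ℕ} (k : Fin (n + 1)) (ppa : X.PPath (n + 1)) (ppb : X.PPath n)
    {c : X.cube (n + 1)} (hlast : ppa.1.getLast? = some ⟨n + 1, c⟩)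
    (hb : ppb.1 = ppa.1 ++ [(⟨n, X.toPCSet.face true k c⟩ : X.toPCSet.Cell)]) :
    U.Xu.toPCSet.face true k (U.cls (n + 1) ppa) = U.cls n ppb :=
  U.face_true n k ppa c hlast ppb hb

lemma cls_eq' {n : ℕ} (a b : X.PPath n) (h : X.toPCSet.Homotopic a.1 b.1) :
    U.cls n a = U.cls n b := (U.cls_eq n a b).mpr h

/-- extending a pointed path by one step -/
lemma pointed_append {a : List X.toPCSet.Cell} (h : X.IsPointedPath a)
    {x y : X.toPCSet.Cell} (hl : a.getLast? = some x) (hs : X.toPCSet.Step x y) :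
    X.IsPointedPath (a ++ [y]) := by
  refine ⟨⟨by simp, ?_⟩, ?_⟩
  · unfold List.Chain'; rw [List.isChain_append]
    refine ⟨h.1.2, List.isChain_singleton _, ?_⟩
    intro u hu v hv
    rw [hl] at hu; cases hu
    simp at hv; subst hv; exact hs
  · rw [List.head?_append_of_ne_nil _ h.1.1]; exact h.2

lemma lift_step {a : List X.toPCSet.Cell} {j : ℕ} {ξ η : U.Xu.toPCSet.Cell}
    (hj : j + 1 < a.length)
    (hξ : LiftAt U a j ξ) (hη : LiftAt U a (j + 1) η)
    (hs : X.toPCSet.Step a[j] a[j+1]) :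
    U.Xu.toPCSet.Step ξ η := by
  obtain ⟨n1, pp1, hpp1, rfl⟩ := hξ
  obtain ⟨n2, pp2, hpp2, rfl⟩ := hη
  have hl1 : pp1.1.getLast? = some a[j] := by rw [hpp1]; exact getLast?_take (by omega)
  have hl2 : pp2.1.getLast? = some a[j+1] := by rw [hpp2]; exact getLast?_take hj
  have htake : a.take (j + 1 + 1) = a.take (j + 1) ++ [a[j+1]] := by
    rw [List.take_succ, List.getElem?_eq_getElem hj]; rfl
  rcases hs with ⟨m, k, c, hx, hy⟩ | ⟨m, k, c, hx, hy⟩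
  · -- a[j] = δ_k^0 c, a[j+1] = ⟨m+1, c⟩ : upward step
    have hd1 : n1 = m := pp_dim pp1 (by rw [hl1, hx])
    have hd2 : n2 = m + 1 := pp_dim pp2 (by rw [hl2, hy])
    subst m; subst n2
    refine Or.inl ⟨n1, k, U.cls (n1+1) pp2, ?_, rfl⟩
    have : U.Xu.toPCSet.face false k (U.cls (n1+1) pp2) = U.cls n1 pp1 := by
      refine cls_face_false U k pp2 pp1 (by rw [hl2, hy]) (by rw [hl1, hx]) ?_
      rw [hpp1, hpp2, htake, hy]
      exact Relation.ReflTransGen.refl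
    rw [this]
  · -- a[j] = ⟨m+1, c⟩, a[j+1] = δ_k^1 c : downward step
    have hd2 : n2 = m := pp_dim pp2 (by rw [hl2, hy])
    have hd1 : n1 = m + 1 := pp_dim pp1 (by rw [hl1, hx])
    subst m; subst n1
    refine Or.inr ⟨n2, k, U.cls (n2+1) pp1, rfl, ?_⟩
    have : U.Xu.toPCSet.face true k (U.cls (n2+1) pp1) = U.cls n2 pp2 := by
      refine cls_face_true U k pp1 pp2 (by rw [hl1, hx]) ?_
      rw [hpp1, hpp2, htake, hy]
    rw [this]

end UnfAux
namespace UnfAux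
open PCSet
variable {X : HDA} (U : Unfolding X)

noncomputable def liftCell (a : List X.toPCSet.Cell) (j : ℕ) : U.Xu.toPCSet.Cell :=
  @Classical.epsilon _ ⟨⟨0, U.Xu.base⟩⟩ (LiftAt U a j)

noncomputable def liftPath (a : List X.toPCSet.Cell) : List U.Xu.toPCSet.Cell :=
  (List.range a.length).map (liftCell U a)

def Lifts (a : List X.toPCSet.Cell) (L : List U.Xu.toPCSet.Cell) : Prop :=
  L.length = a.length ∧ ∀ (j : ℕ) (h : j < L.length), LiftAt U a j L[j]

lemma liftPath_lifts {a : List X.toPCSet.Cell} (h : X.IsPointedPath a) :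
    Lifts U a (liftPath U a) := by
  refine ⟨by simp [liftPath], ?_⟩
  intro j hj
  have hj' : j < a.length := by simpa [liftPath] using hj
  have : (liftPath U a)[j] = liftCell U a j := by simp [liftPath]
  rw [this]
  haveI : Nonempty U.Xu.toPCSet.Cell := ⟨⟨0, U.Xu.base⟩⟩
  exact Classical.epsilon_spec (liftAt_exists U h hj')

lemma lifts_unique {a : List X.toPCSet.Cell} {L L' : List U.Xu.toPCSet.Cell}
    (h : Lifts U a L) (h' : Lifts U a L') : L = L' := by
  refine List.ext_getElem (by rw [h.1, h'.1]) ?_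
  intro j hj hj'
  exact liftAt_unique U (h.2 j hj) (h'.2 j hj')

lemma getElem_zero_of_pointed {a : List X.toPCSet.Cell} (h : X.IsPointedPath a)
    (h0 : 0 < a.length) : a[0] = (⟨0, X.base⟩ : X.toPCSet.Cell) := by
  have := h.2
  rw [List.head?_eq_getElem?, List.getElem?_eq_getElem h0] at this
  exact Option.some.inj this

lemma take_one_of_pointed {a : List X.toPCSet.Cell} (h : X.IsPointedPath a) :
    a.take 1 = [(⟨0, X.base⟩ : X.toPCSet.Cell)] := by
  have h0 : 0 < a.length := by
    cases a; exact absurd rfl h.1.1; simp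
  rw [List.take_succ, List.take_zero, List.getElem?_eq_getElem h0,
    getElem_zero_of_pointed h h0]
  rfl

lemma liftAt_zero {a : List X.toPCSet.Cell} (h : X.IsPointedPath a)
    {ξ : U.Xu.toPCSet.Cell} (hξ : LiftAt U a 0 ξ) : ξ = ⟨0, U.Xu.base⟩ := by
  obtain ⟨n, pp, hpp, rfl⟩ := hξ
  rw [take_one_of_pointed h] at hpp
  have hlast : pp.1.getLast? = some (⟨0, X.base⟩ : X.toPCSet.Cell) := by
    rw [hpp]; rfl
  have hn : n = 0 := pp_dim pp hlast
  subst hn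
  rw [U.cls_base pp hpp]

lemma lifts_pointed {a : List X.toPCSet.Cell} (h : X.IsPointedPath a)
    {L : List U.Xu.toPCSet.Cell} (hL : Lifts U a L) : U.Xu.IsPointedPath L := by
  have h0 : 0 < a.length := by cases a; exact absurd rfl h.1.1; simp
  have hne : L ≠ [] := by
    intro hl; rw [hl] at hL; have := hL.1; simp at this; omega
  have h0L : 0 < L.length := by cases L; exact absurd rfl hne; simp
  refine ⟨⟨hne, ?_⟩, ?_⟩
  · unfold List.Chain'; rw [List.isChain_iff_getElem]
    intro i hi
    have hi1 : i + 1 < L.length := by omega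
    have hia : i + 1 < a.length := by rw [← hL.1]; exact hi1
    have hchain := List.isChain_iff_getElem.mp h.1.2 i (by omega)
    exact lift_step U hia (hL.2 i (by omega)) (hL.2 (i+1) hi1) hchain
  · rw [List.head?_eq_getElem?, List.getElem?_eq_getElem h0L,
      liftAt_zero U h (hL.2 0 h0L)]

lemma lifts_getLast {a : List X.toPCSet.Cell} (h : X.IsPointedPath a)
    {L : List U.Xu.toPCSet.Cell} (hL : Lifts U a L) {n : ℕ} (pp : X.PPath n)
    (hpp : pp.1 = a) : L.getLast? = some ⟨n, U.cls n pp⟩ := by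
  have h0 : 0 < a.length := by cases a; exact absurd rfl h.1.1; simp
  have h0L : 0 < L.length := by rw [hL.1]; exact h0
  have hne : L ≠ [] := by cases L; simp at h0L; simp
  have hj : L.length - 1 < L.length := by omega
  have hlift := hL.2 (L.length - 1) hj
  have htake : a.take (L.length - 1 + 1) = a := by
    rw [hL.1]; exact List.take_of_length_le (by omega)
  obtain ⟨m, pp', hpp', hcell⟩ := hlift
  rw [htake, ← hpp] at hpp'
  obtain ⟨c, hc⟩ := pp.2.2
  have hm' : m = n := by
    have := pp_dim pp' (by rw [hpp', hc]); omega
  subst hm'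
  rw [pp_ext pp' pp hpp'] at hcell
  rw [List.getLast?_eq_getElem?, List.getElem?_eq_getElem hj, hcell]

end UnfAux
namespace UnfAux
open PCSet
variable {X : HDA} (U : Unfolding X)

/-- projection of a cell -/
def pc (U : Unfolding X) (x : U.Xu.toPCSet.Cell) : X.toPCSet.Cell :=
  ⟨x.1, U.proj.toHom.map x.1 x.2⟩

lemma step_pc {x y : U.Xu.toPCSet.Cell} (h : U.Xu.toPCSet.Step x y) :
    X.toPCSet.Step (pc U x) (pc U y) := by
  rcases h with ⟨n, k, c, rfl, rfl⟩ | ⟨n, k, c, rfl, rfl⟩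
  · exact Or.inl ⟨n, k, U.proj.toHom.map (n+1) c, by
      simp only [pc, U.proj.toHom.comm], rfl⟩
  · exact Or.inr ⟨n, k, U.proj.toHom.map (n+1) c, rfl, by
      simp only [pc, U.proj.toHom.comm]⟩

lemma proj_pointed {L : List U.Xu.toPCSet.Cell} (h : U.Xu.IsPointedPath L) :
    X.IsPointedPath (L.map (pc U)) := by
  refine ⟨⟨by simpa using h.1.1, ?_⟩, ?_⟩
  · exact List.isChain_map_of_isChain _ (fun _ _ hs => step_pc U hs) h.1.2
  · have h0L : 0 < L.length := by cases L; exact absurd rfl h.1.1; simp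
    have hL0 : L[0] = (⟨0, U.Xu.base⟩ : U.Xu.toPCSet.Cell) := by
      have := h.2
      rw [List.head?_eq_getElem?, List.getElem?_eq_getElem h0L] at this
      exact Option.some.inj this
    rw [List.head?_eq_getElem?, List.getElem?_eq_getElem (by simpa using h0L)]
    simp only [List.getElem_map]
    rw [hL0]
    simp only [pc, U.proj.pointed]

/-- Lemma A: a pointed path in the unfolding is the lift of its projection. -/
lemma path_lifts {L : List U.Xu.toPCSet.Cell} (h : U.Xu.IsPointedPath L) :
    Lifts U (L.map (pc U)) L := by
  refine ⟨by simp, ?_⟩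
  have key : ∀ (j : ℕ) (hj : j < L.length), LiftAt U (L.map (pc U)) j L[j] := by
    intro j
    induction j with
    | zero =>
      intro hj
      have hL0 : L[0] = (⟨0, U.Xu.base⟩ : U.Xu.toPCSet.Cell) := by
        have := h.2
        rw [List.head?_eq_getElem?, List.getElem?_eq_getElem hj] at this
        exact Option.some.inj this
      have hpt := proj_pointed U h
      refine ⟨0, mkPP [(⟨0, X.base⟩ : X.toPCSet.Cell)]
        ⟨⟨by simp, List.isChain_singleton _⟩, rfl⟩ (n := 0) (c := X.base) rfl, ?_, ?_⟩
      · rw [take_one_of_pointed hpt]; rfl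
      · rw [hL0]
        rw [U.cls_base _ rfl]
    | succ j ih =>
      intro hj
      have hj0 : j < L.length := by omega
      obtain ⟨n, pp, hpp, hcell⟩ := ih hj0
      have hstep : U.Xu.toPCSet.Step L[j] L[j+1] := by
        have := List.isChain_iff_getElem.mp h.1.2 j (by omega)
        simpa using this
      have hplast : pp.1.getLast? = some (pc U L[j]) := by
        rw [hpp, getLast?_take (by simpa using hj0)]
        congr 1
        simp
      have htake : (L.map (pc U)).take (j+1+1) =
          (L.map (pc U)).take (j+1) ++ [pc U L[j+1]] := by
        rw [List.take_succ, List.getElem?_eq_getElem (by simpa using hj)]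
        simp
      rcases hstep with ⟨m, k, c, hx, hy⟩ | ⟨m, k, c, hx, hy⟩
      · -- upward step: L[j] = δ_k^0 c, L[j+1] = ⟨m+1, c⟩
        have hn : n = m := by
          have : pc U L[j] = ⟨m, X.toPCSet.face false k (U.proj.toHom.map (m+1) c)⟩ := by
            rw [hx]; simp only [pc]; rw [U.proj.toHom.comm]
          exact pp_dim pp (by rw [hplast, this])
        subst hn
        -- representative of the top cube
        obtain ⟨b, hb⟩ := U.cls_surj (n+1) c
        obtain ⟨cb, hcb⟩ := b.2.2
        have hcb' : U.proj.toHom.map (n+1) c = cb := by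
          rw [← hb]; exact U.proj_cls (n+1) b cb hcb
        have hface : U.Xu.toPCSet.face false k (U.cls (n+1) b) = U.cls n pp := by
          rw [hb]
          have := hcell
          rw [hx] at this
          exact cell_eq this
        obtain ⟨hpplast, hhom⟩ := (U.face_false n k b cb hcb pp).mp hface
        have hstepX : X.toPCSet.Step (⟨n, X.toPCSet.face false k cb⟩ : X.toPCSet.Cell)
            ⟨n+1, cb⟩ := Or.inl ⟨n, k, cb, rfl, rfl⟩
        have hpt : X.IsPointedPath (pp.1 ++ [(⟨n+1, cb⟩ : X.toPCSet.Cell)]) :=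
          pointed_append (pp.2.1) hpplast hstepX
        have hval : pp.1 ++ [(⟨n+1, cb⟩ : X.toPCSet.Cell)] = (L.map (pc U)).take (j+1+1) := by
          rw [htake, hpp]
          congr 1
          rw [hy]
          simp only [pc]
          rw [hcb']
        refine ⟨n+1, mkPP _ hpt (n := n+1) (c := cb) (by rw [List.getLast?_concat]), hval, ?_⟩
        rw [hy]
        congr 1
        rw [← hb]
        refine (cls_eq' U _ _ ?_).symm
        exact hhom
      · -- downward step: L[j] = ⟨m+1, c⟩, L[j+1] = δ_k^1 c
        have hn : n = m + 1 := by
          have : pc U L[j] = ⟨m+1, U.proj.toHom.map (m+1) c⟩ := by rw [hx]; rfl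
          exact pp_dim pp (by rw [hplast, this])
        subst hn
        have hplast' : pp.1.getLast? = some ⟨m+1, U.proj.toHom.map (m+1) c⟩ := by
          rw [hplast, hx]; rfl
        have hstepX : X.toPCSet.Step (⟨m+1, U.proj.toHom.map (m+1) c⟩ : X.toPCSet.Cell)
            ⟨m, X.toPCSet.face true k (U.proj.toHom.map (m+1) c)⟩ :=
          Or.inr ⟨m, k, _, rfl, rfl⟩
        have hpt : X.IsPointedPath (pp.1 ++
            [(⟨m, X.toPCSet.face true k (U.proj.toHom.map (m+1) c)⟩ : X.toPCSet.Cell)]) :=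
          pointed_append (pp.2.1) hplast' hstepX
        have hval : pp.1 ++ [(⟨m, X.toPCSet.face true k (U.proj.toHom.map (m+1) c)⟩ :
            X.toPCSet.Cell)] = (L.map (pc U)).take (j+1+1) := by
          rw [htake, hpp]
          congr 1
          rw [hy]
          simp only [pc]
          rw [U.proj.toHom.comm]
        refine ⟨m, mkPP _ hpt (n := m)
          (c := X.toPCSet.face true k (U.proj.toHom.map (m+1) c))
          (by rw [List.getLast?_concat]), hval, ?_⟩
        rw [hy]
        congr 1
        have hc : U.cls (m+1) pp = c := by
          rw [hx] at hcell
          exact (cell_eq hcell).symm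
        conv_lhs => rw [← hc]
        exact cls_face_true U k pp _ (by rw [hplast, hx]; rfl) rfl
  exact fun j hj => key j hj

end UnfAux
namespace UnfAux
open PCSet

lemma adjMid_swap {X : PCSet} {a b b' c : X.Cell} (h : X.AdjMid a b b' c) :
    X.AdjMid a b' b c := by
  unfold AdjMid at h ⊢; tauto

lemma adjacent_symm {X : PCSet} {l₁ l₂ : List X.Cell} (h : X.Adjacent l₁ l₂) :
    X.Adjacent l₂ l₁ := by
  obtain ⟨h1, h2, hlen, p, hp0, hp1, heq, hne, A, B, B', C, hA, hB, hB', hC, hmid⟩ := h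
  refine ⟨h2, h1, hlen.symm, p, hp0, hp1.trans_eq hlen, fun q hq => (heq q hq).symm,
    fun hc => hne hc.symm, A, B', B, C, ?_, hB', hB, ?_, adjMid_swap hmid⟩
  · rw [← heq (p-1) (by omega)]; exact hA
  · rw [← heq (p+1) (by omega)]; exact hC

lemma homotopic_symm {X : PCSet} {l₁ l₂ : List X.Cell} (h : X.Homotopic l₁ l₂) :
    X.Homotopic l₂ l₁ := by
  haveI : Std.Symm X.Adjacent := ⟨fun _ _ hs => adjacent_symm hs⟩
  exact Relation.ReflTransGen.symmetric.symm _ _ h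

lemma adj_take {X : PCSet} {l₁ l₂ : List X.Cell} (h1 : X.IsCubePath l₁)
    (h2 : X.IsCubePath l₂) (hlen : l₁.length = l₂.length) {p m : ℕ}
    (hp0 : 0 < p) (hp1 : p + 1 < l₁.length)
    (heq : ∀ q : ℕ, q ≠ p → l₁[q]? = l₂[q]?) (hne : l₁[p]? ≠ l₂[p]?)
    {A B B' C : X.Cell} (hA : l₁[p - 1]? = some A) (hB : l₁[p]? = some B)
    (hB' : l₂[p]? = some B') (hC : l₁[p + 1]? = some C) (hmid : X.AdjMid A B B' C)
    (hp : p + 1 < m) (hm : m ≤ l₁.length) :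
    X.Adjacent (l₁.take m) (l₂.take m) := by
  have htk : ∀ (l : List X.Cell) (q : ℕ), q < m → (l.take m)[q]? = l[q]? := by
    intro l q hq
    rw [List.getElem?_take]
    simp [hq]
  refine ⟨⟨?_, h1.2.prefix (List.take_prefix _ _)⟩,
    ⟨?_, h2.2.prefix (List.take_prefix _ _)⟩, by simp [hlen],
    p, hp0, by simp [List.length_take]; omega, ?_, ?_, A, B, B', C, ?_, ?_, ?_, ?_, hmid⟩
  · simp only [ne_eq, List.take_eq_nil_iff]
    push_neg
    exact ⟨by omega, h1.1⟩
  · simp only [ne_eq, List.take_eq_nil_iff]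
    push_neg
    exact ⟨by omega, h2.1⟩
  · intro q hq
    by_cases hqm : q < m
    · rw [htk _ _ hqm, htk _ _ hqm]; exact heq q hq
    · rw [List.getElem?_take, List.getElem?_take]
      simp [hqm]
  · rw [htk _ _ (by omega), htk _ _ (by omega)]; exact hne
  · rw [htk _ _ (by omega)]; exact hA
  · rw [htk _ _ (by omega)]; exact hB
  · rw [htk _ _ (by omega)]; exact hB'
  · rw [htk _ _ (by omega)]; exact hC

variable {X : HDA} (U : Unfolding X)

lemma liftAt_congr {a a' : List X.toPCSet.Cell} {j : ℕ} {ξ : U.Xu.toPCSet.Cell}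
    (h : a.take (j + 1) = a'.take (j + 1)) (hξ : LiftAt U a j ξ) : LiftAt U a' j ξ := by
  obtain ⟨n, pp, hpp, rfl⟩ := hξ
  exact ⟨n, pp, by rw [hpp, h], rfl⟩

lemma take_eq_of_getElem? {α : Type} {a a' : List α} {m : ℕ}
    (h : ∀ q : ℕ, q < m → a[q]? = a'[q]?) : a.take m = a'.take m := by
  apply List.ext_getElem?
  intro q
  rw [List.getElem?_take, List.getElem?_take]
  by_cases hq : q < m
  · simp only [hq, if_true]; exact h q hq
  · simp [hq]

end UnfAux
namespace UnfAux
open PCSet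
variable {X : HDA} (U : Unfolding X)

lemma getLast?_take' {a : List X.toPCSet.Cell} {j : ℕ} (h : j < a.length) :
    (a.take (j + 1)).getLast? = a[j]? := by
  rw [getLast?_take h, List.getElem?_eq_getElem h]

lemma adjmid_lift {a a' : List X.toPCSet.Cell} {p : ℕ}
    (hp0 : 0 < p) (hp1 : p + 1 < a.length)
    (hpre : a.take p = a'.take p)
    (hhom : X.toPCSet.Homotopic (a.take (p+1+1)) (a'.take (p+1+1)))
    {A B B' C : U.Xu.toPCSet.Cell}
    (hA : LiftAt U a (p-1) A) (hB : LiftAt U a p B) (hB' : LiftAt U a' p B')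
    (hC : LiftAt U a (p+1) C) (hC' : LiftAt U a' (p+1) C)
    {A₀ B₀ B'₀ C₀ : X.toPCSet.Cell}
    (hcA : a[p-1]? = some A₀) (hcB : a[p]? = some B₀) (hcB' : a'[p]? = some B'₀)
    (hcC : a[p+1]? = some C₀) (hcC' : a'[p+1]? = some C₀)
    (hmid : X.toPCSet.Adj1 A₀ B₀ B'₀ C₀ ∨ X.toPCSet.Adj2 A₀ B₀ B'₀ C₀ ∨
      X.toPCSet.Adj3 A₀ B₀ B'₀ C₀ ∨ X.toPCSet.Adj4 A₀ B₀ B'₀ C₀) :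
    U.Xu.toPCSet.Adj1 A B B' C ∨ U.Xu.toPCSet.Adj2 A B B' C ∨
      U.Xu.toPCSet.Adj3 A B B' C ∨ U.Xu.toPCSet.Adj4 A B B' C := by
  have hp1' : p + 1 < a'.length := by
    by_contra h
    rw [List.getElem?_eq_none (by omega)] at hcC'
    exact absurd hcC' (by simp)
  have htB : a.take (p+1) = a.take p ++ [B₀] := by rw [List.take_succ, hcB]; rfl
  have htC : a.take (p+1+1) = a.take (p+1) ++ [C₀] := by rw [List.take_succ, hcC]; rfl
  have htB' : a'.take (p+1) = a.take p ++ [B'₀] := by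
    rw [List.take_succ, hcB', hpre]; rfl
  have htC' : a'.take (p+1+1) = a'.take (p+1) ++ [C₀] := by
    rw [List.take_succ, hcC']; rfl
  obtain ⟨nA, ppA, hppA, hcellA⟩ := hA
  have hlA : ppA.1.getLast? = some A₀ := by
    rw [hppA, getLast?_take' (show p-1 < a.length by omega), hcA]
  rw [show p-1+1 = p from by omega] at hppA
  obtain ⟨nB, ppB, hppB, hcellB⟩ := hB
  have hlB : ppB.1.getLast? = some B₀ := by
    rw [hppB, getLast?_take' (show p < a.length by omega), hcB]
  obtain ⟨nB', ppB', hppB', hcellB'⟩ := hB'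
  have hlB' : ppB'.1.getLast? = some B'₀ := by
    rw [hppB', getLast?_take' (show p < a'.length by omega), hcB']
  obtain ⟨nC, ppC, hppC, hcellC⟩ := hC
  have hlC : ppC.1.getLast? = some C₀ := by
    rw [hppC, getLast?_take' hp1, hcC]
  obtain ⟨nC', ppC', hppC', hcellC'⟩ := hC'
  have hlC' : ppC'.1.getLast? = some C₀ := by
    rw [hppC', getLast?_take' hp1', hcC']
  rcases hmid with hm | hm | hm | hm
  · -- Adj1
    obtain ⟨n, k, l, hk, hl, hkl, u, hc0, hb0, hb'0, ha1, ha2⟩ := hm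
    subst hc0; subst hb0; subst hb'0; subst ha1
    have dA : nA = n := pp_dim ppA hlA
    have dB : nB = n + 1 := pp_dim ppB hlB
    have dB' : nB' = n + 1 := pp_dim ppB' hlB'
    have dC : nC = n + 2 := pp_dim ppC hlC
    have dC' : nC' = n + 2 := pp_dim ppC' hlC'
    subst nA; subst nB; subst nB'; subst nC; subst nC'
    have fB : U.Xu.toPCSet.face false ⟨l, hl⟩ (U.cls (n+2) ppC) = U.cls (n+1) ppB := by
      refine cls_face_false U ⟨l, hl⟩ ppC ppB hlC hlB ?_
      rw [hppB, hppC, htC]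
      exact Relation.ReflTransGen.refl
    have fB' : U.Xu.toPCSet.face false ⟨k, by omega⟩ (U.cls (n+2) ppC) =
        U.cls (n+1) ppB' := by
      refine cls_face_false U ⟨k, by omega⟩ ppC ppB' hlC hlB' ?_
      rw [hppB', hppC, ← htC']
      exact homotopic_symm hhom
    refine Or.inl ⟨n, k, l, hk, hl, hkl, U.cls (n+2) ppC, hcellC, ?_, ?_, ?_, ?_⟩
    · rw [fB]; exact hcellB
    · rw [fB']; exact hcellB'
    · rw [fB]
      have fA : U.Xu.toPCSet.face false ⟨k, hk⟩ (U.cls (n+1) ppB) = U.cls n ppA := by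
        refine cls_face_false U ⟨k, hk⟩ ppB ppA hlB hlA ?_
        rw [hppA, hppB, htB]
        exact Relation.ReflTransGen.refl
      rw [fA]; exact hcellA
    · rw [fB']
      have fA : U.Xu.toPCSet.face false ⟨l - 1, by omega⟩ (U.cls (n+1) ppB') =
          U.cls n ppA := by
        refine cls_face_false U ⟨l - 1, by omega⟩ ppB' ppA hlB' ?_ ?_
        · rw [hlA, ha2]
        · rw [hppA, hppB', htB']
          exact Relation.ReflTransGen.refl
      rw [fA]; exact hcellA
  · -- Adj2
    obtain ⟨n, k, l, hk, hl, hkl, u, ha0, hb0, hb'0, hc1, hc2⟩ := hm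
    subst ha0; subst hb0; subst hb'0; subst hc1
    have dA : nA = n + 2 := pp_dim ppA hlA
    have dB : nB = n + 1 := pp_dim ppB hlB
    have dB' : nB' = n + 1 := pp_dim ppB' hlB'
    have dC : nC = n := pp_dim ppC hlC
    have dC' : nC' = n := pp_dim ppC' hlC'
    subst nA; subst nB; subst nB'; subst nC; subst nC'
    have fB : U.Xu.toPCSet.face true ⟨k, hk⟩ (U.cls (n+2) ppA) = U.cls (n+1) ppB := by
      refine cls_face_true U ⟨k, hk⟩ ppA ppB hlA ?_
      rw [hppB, hppA, htB]
    have fB' : U.Xu.toPCSet.face true ⟨l - 1, by omega⟩ (U.cls (n+2) ppA) =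
        U.cls (n+1) ppB' := by
      refine cls_face_true U ⟨l - 1, by omega⟩ ppA ppB' hlA ?_
      rw [hppB', hppA, htB']
    refine Or.inr (Or.inl ⟨n, k, l, hk, hl, hkl, U.cls (n+2) ppA, hcellA, ?_, ?_, ?_, ?_⟩)
    · rw [fB]; exact hcellB
    · rw [fB']; exact hcellB'
    · rw [fB]
      have fC : U.Xu.toPCSet.face true ⟨l, hl⟩ (U.cls (n+1) ppB) = U.cls n ppC := by
        refine cls_face_true U ⟨l, hl⟩ ppB ppC hlB ?_
        rw [hppC, hppB, htC]
      rw [fC]; exact hcellC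
    · rw [fB']
      have fC : U.Xu.toPCSet.face true ⟨k, by omega⟩ (U.cls (n+1) ppB') =
          U.cls n ppC' := by
        refine cls_face_true U ⟨k, by omega⟩ ppB' ppC' hlB' ?_
        rw [hppC', hppB', htC', hc2]
      rw [fC]; exact hcellC'
  · -- Adj3
    obtain ⟨n, k, l, hk, hl, hkl, u, hb'0, hb0, ha0, hc0⟩ := hm
    subst hb'0; subst hb0; subst ha0; subst hc0
    have dA : nA = n + 1 := pp_dim ppA hlA
    have dB : nB = n := pp_dim ppB hlB
    have dB' : nB' = n + 2 := pp_dim ppB' hlB'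
    have dC : nC = n + 1 := pp_dim ppC hlC
    have dC' : nC' = n + 1 := pp_dim ppC' hlC'
    subst nA; subst nB; subst nB'; subst nC; subst nC'
    have fA : U.Xu.toPCSet.face false ⟨k, by omega⟩ (U.cls (n+2) ppB') =
        U.cls (n+1) ppA := by
      refine cls_face_false U ⟨k, by omega⟩ ppB' ppA hlB' hlA ?_
      rw [hppA, hppB', htB']
      exact Relation.ReflTransGen.refl
    have fC : U.Xu.toPCSet.face true ⟨l, hl⟩ (U.cls (n+2) ppB') = U.cls (n+1) ppC' := by
      refine cls_face_true U ⟨l, hl⟩ ppB' ppC' hlB' ?_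
      rw [hppC', hppB', htC']
    refine Or.inr (Or.inr (Or.inl ⟨n, k, l, hk, hl, hkl, U.cls (n+2) ppB',
      hcellB', ?_, ?_, ?_⟩))
    · rw [fC]
      have fBg : U.Xu.toPCSet.face false ⟨k, hk⟩ (U.cls (n+1) ppC') = U.cls n ppB := by
        refine cls_face_false U ⟨k, hk⟩ ppC' ppB hlC' hlB ?_
        rw [hppB, hppC', ← htC]
        exact hhom
      rw [fBg]; exact hcellB
    · rw [fA]; exact hcellA
    · rw [fC]; exact hcellC'
  · -- Adj4
    obtain ⟨n, k, l, hk, hl, hkl, u, hb'0, hb0, ha0, hc0⟩ := hm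
    subst hb'0; subst hb0; subst ha0; subst hc0
    have dA : nA = n + 1 := pp_dim ppA hlA
    have dB : nB = n := pp_dim ppB hlB
    have dB' : nB' = n + 2 := pp_dim ppB' hlB'
    have dC : nC = n + 1 := pp_dim ppC hlC
    have dC' : nC' = n + 1 := pp_dim ppC' hlC'
    subst nA; subst nB; subst nB'; subst nC; subst nC'
    have fA : U.Xu.toPCSet.face false ⟨l, hl⟩ (U.cls (n+2) ppB') = U.cls (n+1) ppA := by
      refine cls_face_false U ⟨l, hl⟩ ppB' ppA hlB' hlA ?_
      rw [hppA, hppB', htB']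
      exact Relation.ReflTransGen.refl
    have fC : U.Xu.toPCSet.face true ⟨k, by omega⟩ (U.cls (n+2) ppB') =
        U.cls (n+1) ppC' := by
      refine cls_face_true U ⟨k, by omega⟩ ppB' ppC' hlB' ?_
      rw [hppC', hppB', htC']
    refine Or.inr (Or.inr (Or.inr ⟨n, k, l, hk, hl, hkl, U.cls (n+2) ppB',
      hcellB', ?_, ?_, ?_⟩))
    · rw [fA]
      have fBg : U.Xu.toPCSet.face true ⟨k, hk⟩ (U.cls (n+1) ppA) = U.cls n ppB := by
        refine cls_face_true U ⟨k, hk⟩ ppA ppB hlA ?_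
        rw [hppB, hppA, htB]
      rw [fBg]; exact hcellB
    · rw [fA]; exact hcellA
    · rw [fC]; exact hcellC'

end UnfAux
namespace UnfAux
open PCSet
variable {X : HDA} (U : Unfolding X)

lemma adj_lift {a a' : List X.toPCSet.Cell} (hadj : X.toPCSet.Adjacent a a')
    {L L' : List U.Xu.toPCSet.Cell} (hL : Lifts U a L) (hL' : Lifts U a' L')
    (hLp : U.Xu.IsPointedPath L) (hLp' : U.Xu.IsPointedPath L') :
    L = L' ∨ U.Xu.toPCSet.Adjacent L L' := by
  obtain ⟨h1, h2, hlen, p, hp0, hp1, heq, hne, A₀, B₀, B'₀, C₀, hcA, hcB, hcB', hcC, hmid⟩ :=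
    hadj
  have hcC' : a'[p+1]? = some C₀ := by rw [← heq (p+1) (by omega)]; exact hcC
  have hcA' : a'[p-1]? = some A₀ := by rw [← heq (p-1) (by omega)]; exact hcA
  have hcB'2 : a[p]? = some B₀ := hcB
  have hpre : a.take p = a'.take p :=
    take_eq_of_getElem? (fun q hq => heq q (by omega))
  have hhom : X.toPCSet.Homotopic (a.take (p+1+1)) (a'.take (p+1+1)) :=
    Relation.ReflTransGen.single
      (adj_take h1 h2 hlen hp0 hp1 heq hne hcA hcB hcB' hcC hmid (by omega) (by omega))
  have hlenL : L.length = a.length := hL.1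
  have hlenL' : L'.length = a'.length := hL'.1
  have houtside : ∀ (q : ℕ) (hq : q < L.length) (hq' : q < L'.length), q ≠ p →
      L[q] = L'[q] := by
    intro q hq hq' hqp
    rcases lt_or_gt_of_ne hqp with hlt | hgt
    · refine liftAt_unique U (hL.2 q hq) ?_
      refine liftAt_congr U ?_ (hL'.2 q hq')
      exact (take_eq_of_getElem? (fun r hr => heq r (by omega))).symm
    · obtain ⟨n1, pp1, hpp1, hcell1⟩ := hL.2 q hq
      obtain ⟨n2, pp2, hpp2, hcell2⟩ := hL'.2 q hq'
      have hqa : q < a.length := hlenL ▸ hq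
      have hqa' : q < a'.length := hlenL' ▸ hq'
      have hcq : a[q]? = some a[q] := List.getElem?_eq_getElem hqa
      have hcq' : a'[q]? = some a[q] := by rw [← heq q hqp]; exact hcq
      have hl1 : pp1.1.getLast? = some ⟨a[q].1, a[q].2⟩ := by
        rw [hpp1, getLast?_take' hqa, hcq]
      have hl2 : pp2.1.getLast? = some ⟨a[q].1, a[q].2⟩ := by
        rw [hpp2, getLast?_take' hqa', hcq']
      have d1 : n1 = a[q].1 := pp_dim pp1 hl1
      have d2 : n2 = a[q].1 := pp_dim pp2 hl2
      subst n1; subst n2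
      have hcls : U.cls _ pp1 = U.cls _ pp2 := by
        refine cls_eq' U _ _ ?_
        rw [hpp1, hpp2]
        exact Relation.ReflTransGen.single
          (adj_take h1 h2 hlen hp0 hp1 heq hne hcA hcB hcB' hcC hmid
            (by omega) (by omega))
      rw [hcell1, hcell2, hcls]
  have hpL : p < L.length := by omega
  have hpL' : p < L'.length := by rw [hlenL', ← hlen]; omega
  have hp1L : p + 1 < L.length := by omega
  have hp1L' : p + 1 < L'.length := by rw [hlenL', ← hlen]; omega
  by_cases hBB : L[p] = L'[p]
  · left
    refine List.ext_getElem (by rw [hlenL, hlenL', hlen]) ?_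
    intro q hq hq'
    by_cases hqp : q = p
    · subst hqp; exact hBB
    · exact houtside q hq hq' hqp
  · right
    have hCeq : L[p+1] = L'[p+1] := houtside (p+1) hp1L hp1L' (by omega)
    have hC'lift : LiftAt U a' (p+1) L[p+1] := by
      rw [hCeq]; exact hL'.2 (p+1) hp1L'
    have hAeq : L[p-1] = L'[p-1] :=
      houtside (p-1) (by omega) (by omega) (by omega)
    have hA'lift : LiftAt U a' (p-1) L[p-1] := by
      rw [hAeq]; exact hL'.2 (p-1) (by omega)
    refine ⟨hLp.1, hLp'.1, by rw [hlenL, hlenL', hlen], p, hp0, hp1L, ?_, ?_,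
      L[p-1], L[p], L'[p], L[p+1],
      List.getElem?_eq_getElem (by omega), List.getElem?_eq_getElem hpL,
      List.getElem?_eq_getElem hpL', List.getElem?_eq_getElem hp1L, ?_⟩
    · intro q hqp
      by_cases hq : q < L.length
      · rw [List.getElem?_eq_getElem hq,
          List.getElem?_eq_getElem (show q < L'.length by rw [hlenL', ← hlen]; omega),
          houtside q hq (by rw [hlenL', ← hlen]; omega) hqp]
      · rw [List.getElem?_eq_none (by omega),
          List.getElem?_eq_none (by rw [hlenL', ← hlen]; omega)]
    · rw [List.getElem?_eq_getElem hpL, List.getElem?_eq_getElem hpL']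
      intro hc
      exact hBB (Option.some.inj hc)
    · -- AdjMid
      rcases hmid with h | h | h | h | h | h | h | h
      · rcases adjmid_lift U hp0 hp1 hpre hhom (hL.2 (p-1) (by omega)) (hL.2 p hpL)
          (hL'.2 p hpL') (hL.2 (p+1) hp1L) hC'lift hcA hcB hcB' hcC hcC'
          (Or.inl h) with g | g | g | g
        exacts [Or.inl g, Or.inr (Or.inl g), Or.inr (Or.inr (Or.inl g)),
          Or.inr (Or.inr (Or.inr (Or.inl g)))]
      · rcases adjmid_lift U hp0 hp1 hpre hhom (hL.2 (p-1) (by omega)) (hL.2 p hpL)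
          (hL'.2 p hpL') (hL.2 (p+1) hp1L) hC'lift hcA hcB hcB' hcC hcC'
          (Or.inr (Or.inl h)) with g | g | g | g
        exacts [Or.inl g, Or.inr (Or.inl g), Or.inr (Or.inr (Or.inl g)),
          Or.inr (Or.inr (Or.inr (Or.inl g)))]
      · rcases adjmid_lift U hp0 hp1 hpre hhom (hL.2 (p-1) (by omega)) (hL.2 p hpL)
          (hL'.2 p hpL') (hL.2 (p+1) hp1L) hC'lift hcA hcB hcB' hcC hcC'
          (Or.inr (Or.inr (Or.inl h))) with g | g | g | g
        exacts [Or.inl g, Or.inr (Or.inl g), Or.inr (Or.inr (Or.inl g)),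
          Or.inr (Or.inr (Or.inr (Or.inl g)))]
      · rcases adjmid_lift U hp0 hp1 hpre hhom (hL.2 (p-1) (by omega)) (hL.2 p hpL)
          (hL'.2 p hpL') (hL.2 (p+1) hp1L) hC'lift hcA hcB hcB' hcC hcC'
          (Or.inr (Or.inr (Or.inr h))) with g | g | g | g
        exacts [Or.inl g, Or.inr (Or.inl g), Or.inr (Or.inr (Or.inl g)),
          Or.inr (Or.inr (Or.inr (Or.inl g)))]
      -- swapped cases
      all_goals {
        rcases adjmid_lift U hp0 (by rw [← hlen]; omega) hpre.symm (homotopic_symm hhom)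
          hA'lift (hL'.2 p hpL') (hL.2 p hpL) hC'lift (hL.2 (p+1) hp1L)
          hcA' hcB' hcB hcC' hcC
          (by tauto) with g | g | g | g
        · exact Or.inr (Or.inr (Or.inr (Or.inr (Or.inl g))))
        · exact Or.inr (Or.inr (Or.inr (Or.inr (Or.inr (Or.inl g)))))
        · exact Or.inr (Or.inr (Or.inr (Or.inr (Or.inr (Or.inr (Or.inl g))))))
        · exact Or.inr (Or.inr (Or.inr (Or.inr (Or.inr (Or.inr (Or.inr g))))))
      }

lemma adjacent_pointed {a a' : List X.toPCSet.Cell} (h : X.toPCSet.Adjacent a a')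
    (hp : X.IsPointedPath a) : X.IsPointedPath a' := by
  obtain ⟨h1, h2, hlen, p, hp0, hp1, heq, _⟩ := h
  refine ⟨h2, ?_⟩
  rw [List.head?_eq_getElem?, ← heq 0 (by omega), ← List.head?_eq_getElem?]
  exact hp.2

lemma homotopic_pointed {a a' : List X.toPCSet.Cell} (h : X.toPCSet.Homotopic a a')
    (hp : X.IsPointedPath a) : X.IsPointedPath a' := by
  induction h with
  | refl => exact hp
  | tail _ hadj ih => exact adjacent_pointed hadj ih

lemma homotopic_lift {a b : List X.toPCSet.Cell} (h : X.toPCSet.Homotopic a b)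
    (hpa : X.IsPointedPath a) {L : List U.Xu.toPCSet.Cell} (hL : Lifts U a L) :
    ∀ L', Lifts U b L' → U.Xu.toPCSet.Homotopic L L' := by
  induction h with
  | refl =>
    intro L' hL'
    rw [lifts_unique U hL hL']
    exact Relation.ReflTransGen.refl
  | @tail b c hab hbc ih =>
    intro L'' hL''
    have hpb : X.IsPointedPath b := homotopic_pointed hab hpa
    have hpc : X.IsPointedPath c := adjacent_pointed hbc hpb
    have hLb := liftPath_lifts U hpb
    have h1 := ih _ hLb
    rcases adj_lift U hbc hLb hL'' (lifts_pointed U hpb hLb) (lifts_pointed U hpc hL'')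
      with g | g
    · rw [← g]; exact h1
    · exact h1.tail g

end UnfAux
namespace UnfAux
open PCSet
variable {X : HDA} (U : Unfolding X)

theorem xu_tree : U.Xu.IsTree := by
  intro x
  constructor
  · obtain ⟨aP, haP⟩ := U.cls_surj x.1 x.2
    have hpa : X.IsPointedPath aP.1 := aP.2.1
    have hl := liftPath_lifts U hpa
    refine ⟨liftPath U aP.1, lifts_pointed U hpa hl, ?_⟩
    rw [lifts_getLast U hpa hl aP rfl, haP]
  · intro l₁ l₂ hp1 hl1 hp2 hl2
    have hf1 := path_lifts U hp1
    have hf2 := path_lifts U hp2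
    have hne1 : l₁ ≠ [] := hp1.1.1
    have hne2 : l₂ ≠ [] := hp2.1.1
    have h01 : 0 < l₁.length := by cases l₁; exact absurd rfl hne1; simp
    have h02 : 0 < l₂.length := by cases l₂; exact absurd rfl hne2; simp
    have e1 : l₁[l₁.length - 1] = x := by
      rw [List.getLast?_eq_getElem?, List.getElem?_eq_getElem (by omega)] at hl1
      exact Option.some.inj hl1
    have e2 : l₂[l₂.length - 1] = x := by
      rw [List.getLast?_eq_getElem?, List.getElem?_eq_getElem (by omega)] at hl2
      exact Option.some.inj hl2
    have hlift1 : LiftAt U (l₁.map (pc U)) (l₁.length - 1) x := by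
      rw [← e1]; exact hf1.2 (l₁.length - 1) (by omega)
    have hlift2 : LiftAt U (l₂.map (pc U)) (l₂.length - 1) x := by
      rw [← e2]; exact hf2.2 (l₂.length - 1) (by omega)
    obtain ⟨n1, pp1, hpp1, hc1⟩ := hlift1
    obtain ⟨n2, pp2, hpp2, hc2⟩ := hlift2
    rw [List.take_of_length_le (by simp; omega)] at hpp1
    rw [List.take_of_length_le (by simp; omega)] at hpp2
    have hn : n1 = n2 := cell_dim (hc1.symm.trans hc2)
    subst n1
    have hcls : U.cls n2 pp1 = U.cls n2 pp2 := cell_eq (hc1.symm.trans hc2)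
    have hhom : X.toPCSet.Homotopic (l₁.map (pc U)) (l₂.map (pc U)) := by
      have := (U.cls_eq n2 pp1 pp2).mp hcls
      rw [hpp1, hpp2] at this
      exact this
    exact homotopic_lift U hhom (proj_pointed U hp1) hf1 l₂ hf2

section Tree
variable (ht : X.IsTree)

noncomputable def ppOf (n : ℕ) (x : X.cube n) : X.PPath n :=
  ⟨Classical.choose (ht ⟨n, x⟩).1, (Classical.choose_spec (ht ⟨n, x⟩).1).1,
    x, (Classical.choose_spec (ht ⟨n, x⟩).1).2⟩

lemma ppOf_last (n : ℕ) (x : X.cube n) :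
    (ppOf ht n x).1.getLast? = some ⟨n, x⟩ :=
  (Classical.choose_spec (ht ⟨n, x⟩).1).2

lemma cls_eq_ppOf {n : ℕ} (a : X.PPath n) {x : X.cube n}
    (h : a.1.getLast? = some ⟨n, x⟩) : U.cls n a = U.cls n (ppOf ht n x) :=
  cls_eq' U _ _ ((ht ⟨n, x⟩).2 a.1 (ppOf ht n x).1 a.2.1 h (ppOf ht n x).2.1
    (ppOf_last ht n x))

noncomputable def invMap (n : ℕ) (x : X.cube n) : U.Xu.cube n :=
  U.cls n (ppOf ht n x)

lemma invMap_comm (n : ℕ) (ν : Bool) (k : Fin (n + 1)) (x : X.cube (n + 1)) :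
    invMap U ht n (X.toPCSet.face ν k x) =
      U.Xu.toPCSet.face ν k (invMap U ht (n + 1) x) := by
  cases ν
  · -- lower face
    refine (cls_face_false U k (ppOf ht (n+1) x) (ppOf ht n (X.toPCSet.face false k x))
      (ppOf_last ht (n+1) x) (ppOf_last ht n _) ?_).symm
    refine (ht ⟨n+1, x⟩).2 _ _ ?_ ?_ (ppOf ht (n+1) x).2.1 (ppOf_last ht (n+1) x)
    · exact pointed_append (ppOf ht n _).2.1 (ppOf_last ht n _)
        (Or.inl ⟨n, k, x, rfl, rfl⟩)
    · exact List.getLast?_concat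
  · -- upper face
    have hext : U.Xu.toPCSet.face true k (U.cls (n+1) (ppOf ht (n+1) x)) =
        U.cls n (mkPP ((ppOf ht (n+1) x).1 ++ [⟨n, X.toPCSet.face true k x⟩])
          (pointed_append (ppOf ht (n+1) x).2.1 (ppOf_last ht (n+1) x)
            (Or.inr ⟨n, k, x, rfl, rfl⟩))
          (n := n) (c := X.toPCSet.face true k x) (List.getLast?_concat)) :=
      cls_face_true U k _ _ (ppOf_last ht (n+1) x) rfl
    unfold invMap
    rw [hext]
    exact (cls_eq_ppOf U ht _ (List.getLast?_concat)).symm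

lemma invMap_base : invMap U ht 0 X.base = U.Xu.base := by
  have hpt : X.IsPointedPath [(⟨0, X.base⟩ : X.toPCSet.Cell)] :=
    ⟨⟨by simp, List.isChain_singleton _⟩, rfl⟩
  have h1 : U.cls 0 (mkPP [(⟨0, X.base⟩ : X.toPCSet.Cell)] hpt
      (n := 0) (c := X.base) rfl) = U.Xu.base := U.cls_base _ rfl
  unfold invMap
  rw [← cls_eq_ppOf U ht _ (by rfl : (mkPP [(⟨0, X.base⟩ : X.toPCSet.Cell)] hpt
      (n := 0) (c := X.base) rfl).1.getLast? = some ⟨0, X.base⟩), h1]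

lemma invMap_proj (n : ℕ) (ξ : U.Xu.cube n) :
    invMap U ht n (U.proj.toHom.map n ξ) = ξ := by
  obtain ⟨a, ha⟩ := U.cls_surj n ξ
  obtain ⟨c, hc⟩ := a.2.2
  have hproj : U.proj.toHom.map n ξ = c := by rw [← ha]; exact U.proj_cls n a c hc
  rw [hproj]
  unfold invMap
  rw [← cls_eq_ppOf U ht a hc, ha]

lemma proj_invMap (n : ℕ) (x : X.cube n) :
    U.proj.toHom.map n (invMap U ht n x) = x :=
  U.proj_cls n _ _ (ppOf_last ht n x)

end Tree

lemma hdahom_ext {P Q : HDA} {f g : HDAHom P Q}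
    (h : ∀ (n : ℕ) (x : P.cube n), f.toHom.map n x = g.toHom.map n x) : f = g := by
  obtain ⟨⟨fm, fc⟩, fp⟩ := f
  obtain ⟨⟨gm, gc⟩, gp⟩ := g
  have : fm = gm := funext fun n => funext fun x => h n x
  subst this
  rfl

theorem proj_iso (ht : X.IsTree) : U.proj.IsIso := by
  refine ⟨⟨⟨fun n x => invMap U ht n x, ?_⟩, invMap_base U ht⟩, ?_, ?_⟩
  · intro n ν k x
    exact invMap_comm U ht n ν k x
  · exact hdahom_ext (fun n x => invMap_proj U ht n x)
  · exact hdahom_ext (fun n x => proj_invMap U ht n x)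

end UnfAux

/-- Proposition 4.4: the unfolding of any HDA is a higher-dimensional tree,
and if `X` itself is a higher-dimensional tree then the projection
`π_X : X̃ → X` is an isomorphism of HDA. -/
theorem unfolding_is_tree (X : HDA) (U : Unfolding X) :
    U.Xu.IsTree ∧ (X.IsTree → U.proj.IsIso) :=
  ⟨UnfAux.xu_tree U, fun ht => UnfAux.proj_iso U ht⟩
end

section
/- If X is a higher-dimensional automaton and (x̃_1,…,x̃_m) is a pointed cube path in the unfolding X̃, then for every j = 1,…,m the sequence (π_X x̃_1,…,π_X x̃_j) is a pointed cube path in X belonging to the homotopy class x̃_j. -/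
set_option autoImplicit false

open PCSet

/-- Lemma 4.7: if `(x̃_1, …, x̃_m)` is a pointed cube path in the unfolding
`X̃`, then for every `j` the projected prefix `(π_X x̃_1, …, π_X x̃_j)` is a
pointed cube path in `X` belonging to the homotopy class `x̃_j`. -/
theorem unfolding_path_representatives (X : HDA) (U : Unfolding X)
    (lt : List U.Xu.toPCSet.Cell) (h : U.Xu.IsPointedPath lt) :
    ∀ (j : ℕ) (hj : j < lt.length) (n : ℕ) (x : U.Xu.cube n),
      lt.get ⟨j, hj⟩ = ⟨n, x⟩ →
      ∃ a : X.PPath n,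
        a.1 = (lt.take (j + 1)).map U.proj.toHom.cell ∧ U.cls n a = x := by
  obtain ⟨⟨hne, hchain⟩, hhead⟩ := h
  intro j
  induction j with
  | zero =>
    intro hj n x hx
    have h0 : lt.get ⟨0, hj⟩ = ⟨0, U.Xu.base⟩ := by
      cases lt with
      | nil => exact absurd rfl hne
      | cons a l => simpa using hhead
    have hnx : (⟨n, x⟩ : U.Xu.toPCSet.Cell) = ⟨0, U.Xu.base⟩ := hx.symm.trans h0
    injection hnx with h1 h2
    subst h1
    have h2' := eq_of_heq h2; subst h2'
    refine ⟨⟨[⟨0, X.base⟩], ⟨⟨by simp, List.isChain_singleton _⟩, rfl⟩, X.base, rfl⟩, ?_, ?_⟩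
    · cases lt with
      | nil => exact absurd rfl hne
      | cons a l =>
        have ha : a = ⟨0, U.Xu.base⟩ := by simpa using hhead
        subst ha
        simp [Hom.cell, U.proj.pointed]
    · exact U.cls_base _ rfl
  | succ j IH =>
    intro hj n x hx
    have hjlt : j < lt.length := by omega
    have hstep := List.isChain_iff_getElem.mp hchain j (by omega)
    have hget : lt[j+1]? = some (⟨n, x⟩ : U.Xu.toPCSet.Cell) := by
      rw [List.getElem?_eq_getElem hj]
      exact congrArg some hx
    rcases hstep with ⟨m, k, c, hprev, hcur⟩ | ⟨m, k, c, hprev, hcur⟩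
    · -- going up: prev = δ_k^0 c, cur = c
      have hnx : (⟨n, x⟩ : U.Xu.toPCSet.Cell) = ⟨m + 1, c⟩ := hx.symm.trans hcur
      injection hnx with h1 h2
      subst h1
      have h2' := eq_of_heq h2; subst h2'
      obtain ⟨a, hamap, hacls⟩ := IH hjlt m (U.Xu.toPCSet.face false k x) hprev
      obtain ⟨a', ha'⟩ := U.cls_surj (m + 1) x
      obtain ⟨hpa', c₀, hlast'⟩ := a'.2
      have hproj : U.proj.toHom.map (m + 1) x = c₀ := by
        have := U.proj_cls (m + 1) a' c₀ hlast'
        rwa [ha'] at this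
      have hcls_a : U.Xu.toPCSet.face false k (U.cls (m + 1) a') = U.cls m a := by
        rw [ha', hacls]
      obtain ⟨halast, hhom⟩ := (U.face_false m k a' c₀ hlast' a).mp hcls_a
      obtain ⟨⟨hane, hachain⟩, hahead⟩ := a.2.1
      have hpb : X.IsPointedPath (a.1 ++ [(⟨m + 1, c₀⟩ : X.toPCSet.Cell)]) := by
        refine ⟨⟨by simp, ?_⟩, ?_⟩
        · refine List.isChain_append.mpr ?_
          refine ⟨hachain, List.isChain_singleton _, ?_⟩
          intro p hp q hq
          rw [halast] at hp
          simp only [Option.mem_def, Option.some.injEq, List.head?_cons] at hp hq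
          subst hp; subst hq
          exact Or.inl ⟨m, k, c₀, rfl, rfl⟩
        · rw [List.head?_append_of_ne_nil _ hane]; exact hahead
      refine ⟨⟨a.1 ++ [⟨m + 1, c₀⟩], hpb, c₀, List.getLast?_concat⟩, ?_, ?_⟩
      · rw [List.take_succ, List.map_append, ← hamap, hget]
        simp [Hom.cell, hproj]
      · have := (U.cls_eq (m + 1) ⟨a.1 ++ [⟨m + 1, c₀⟩], hpb, c₀, List.getLast?_concat⟩
          a').mpr hhom
        rw [this, ha']
    · -- going down: cur = δ_k^1 prev
      have hnx : (⟨n, x⟩ : U.Xu.toPCSet.Cell) = ⟨m, U.Xu.toPCSet.face true k c⟩ :=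
        hx.symm.trans hcur
      injection hnx with h1 h2
      subst h1
      have h2' := eq_of_heq h2; subst h2'
      obtain ⟨a, hamap, hacls⟩ := IH hjlt (n + 1) c hprev
      obtain ⟨hpa, c₀, hlast⟩ := a.2
      have hproj : U.proj.toHom.map (n + 1) c = c₀ := by
        have := U.proj_cls (n + 1) a c₀ hlast
        rwa [hacls] at this
      obtain ⟨⟨hane, hachain⟩, hahead⟩ := hpa
      have hpb : X.IsPointedPath (a.1 ++ [(⟨n, X.toPCSet.face true k c₀⟩ : X.toPCSet.Cell)]) := by
        refine ⟨⟨by simp, ?_⟩, ?_⟩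
        · refine List.isChain_append.mpr ?_
          refine ⟨hachain, List.isChain_singleton _, ?_⟩
          intro p hp q hq
          rw [hlast] at hp
          simp only [Option.mem_def, Option.some.injEq, List.head?_cons] at hp hq
          subst hp; subst hq
          exact Or.inr ⟨n, k, c₀, rfl, rfl⟩
        · rw [List.head?_append_of_ne_nil _ hane]; exact hahead
      refine ⟨⟨a.1 ++ [⟨n, X.toPCSet.face true k c₀⟩], hpb, X.toPCSet.face true k c₀,
        List.getLast?_concat⟩, ?_, ?_⟩
      · rw [List.take_succ, List.map_append, ← hamap, hget]
        simp only [Option.toList_some, List.map_cons, List.map_nil]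
        have : U.proj.toHom.cell ⟨n, U.Xu.toPCSet.face true k c⟩ =
            ⟨n, X.toPCSet.face true k c₀⟩ := by
          simp [Hom.cell, U.proj.toHom.comm, hproj]
        rw [this]
      · have := U.face_true n k a c₀ hlast
          ⟨a.1 ++ [⟨n, X.toPCSet.face true k c₀⟩], hpb, X.toPCSet.face true k c₀,
            List.getLast?_concat⟩ rfl
        rw [← this, hacls]
end
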